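/- arXiv:2001.01434 — 5 statements merged into one kernel-verified Lean document; each statement's English description precedes it below -/
import Mathlib

section
/- Let p ≥ 1, let L : ℝ^p → ℝ be twice continuously differentiable with gradient S = ∇L, whose Hessian ∇²L(β) is positive definite at every β ∈ ℝ^p, and let β₀ ∈ ℝ^p satisfy S(β₀) = 0. Fix λ > 0 and define the Lyapunov function L_λ(Δ) = L(β₀ + Δ) − L(β₀) + λ‖Δ‖², where ‖·‖ is the Euclidean norm. Then there exist α > 0 and ε > 0 such that for all Δ with ‖Δ‖ < ε, ⟨∇L_λ(Δ), S(β₀ + Δ)⟩ ≥ α·L_λ(Δ). -/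
open scoped RealInnerProductSpace

set_option maxHeartbeats 1000000

private lemma mono_helper {g g' : ℝ → ℝ}
    (hd : ∀ t, HasDerivAt g (g' t) t)
    (hnn : ∀ t ∈ Set.Icc (0:ℝ) 1, 0 ≤ g' t) :
    MonotoneOn g (Set.Icc (0:ℝ) 1) := by
  apply monotoneOn_of_deriv_nonneg (convex_Icc 0 1)
  · exact fun t _ => (hd t).continuousAt.continuousWithinAt
  · exact fun t _ => ((hd t).differentiableAt).differentiableWithinAt
  · intro t ht
    rw [interior_Icc] at ht
    rw [(hd t).deriv]
    exact hnn t ⟨ht.1.le, ht.2.le⟩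

/-- part (ii) of the Lyapunov-function lemma: there exist `α > 0` and
`ε > 0` such that `⟨∇L_λ(Δ), S(β₀+Δ)⟩ ≥ α·L_λ(Δ)` for all `‖Δ‖ < ε`. -/
theorem stmt2 (p : ℕ) (hp : 1 ≤ p)
    (L : EuclideanSpace ℝ (Fin p) → ℝ) (hL : ContDiff ℝ 2 L)
    (hHess : ∀ β v : EuclideanSpace ℝ (Fin p),
      v ≠ 0 → 0 < ⟪fderiv ℝ (gradient L) β v, v⟫)
    (β₀ : EuclideanSpace ℝ (Fin p)) (hβ₀ : gradient L β₀ = 0)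
    (lam : ℝ) (hlam : 0 < lam)
    (Llam : EuclideanSpace ℝ (Fin p) → ℝ)
    (hLlam : ∀ Δ, Llam Δ = L (β₀ + Δ) - L β₀ + lam * ‖Δ‖ ^ 2) :
    ∃ α : ℝ, 0 < α ∧ ∃ ε : ℝ, 0 < ε ∧
      ∀ Δ : EuclideanSpace ℝ (Fin p), ‖Δ‖ < ε →
        α * Llam Δ ≤ ⟪gradient Llam Δ, gradient L (β₀ + Δ)⟫ := by
  have hfun : Llam = fun Δ => L (β₀ + Δ) - L β₀ + lam * ‖Δ‖ ^ 2 := funext hLlam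
  clear hLlam
  subst hfun
  set S : EuclideanSpace ℝ (Fin p) → EuclideanSpace ℝ (Fin p) := gradient L with hS_def
  have hLd : Differentiable ℝ L := hL.differentiable (by norm_num)
  have hS : ContDiff ℝ 1 S := by
    have h1 : ContDiff ℝ 1 (fderiv ℝ L) := hL.fderiv_right (by norm_num)
    exact ((InnerProductSpace.toDual ℝ (EuclideanSpace ℝ (Fin p))).symm.contDiff).comp h1
  set H : EuclideanSpace ℝ (Fin p) →
      EuclideanSpace ℝ (Fin p) →L[ℝ] EuclideanSpace ℝ (Fin p) :=
    fun β => fderiv ℝ S β with hH_def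
  have hSd : ∀ x, HasFDerivAt S (H x) x := fun x => (hS.differentiable one_ne_zero x).hasFDerivAt
  have hHcont : Continuous H := hS.continuous_fderiv one_ne_zero
  have hfd : ∀ x, HasFDerivAt L
      (InnerProductSpace.toDual ℝ (EuclideanSpace ℝ (Fin p)) (S x)) x := fun x =>
    hasGradientAt_iff_hasFDerivAt.mp (hLd x).hasGradientAt
  -- minimum eigenvalue of the Hessian at β₀
  haveI : Nonempty (Fin p) := ⟨⟨0, hp⟩⟩
  have hsne : (Metric.sphere (0 : EuclideanSpace ℝ (Fin p)) 1).Nonempty :=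
    NormedSpace.sphere_nonempty.mpr zero_le_one
  have hQcont : Continuous fun v : EuclideanSpace ℝ (Fin p) => ⟪H β₀ v, v⟫ :=
    Continuous.inner (H β₀).continuous continuous_id
  obtain ⟨v₀, hv₀mem, hv₀min⟩ :=
    (isCompact_sphere (0 : EuclideanSpace ℝ (Fin p)) 1).exists_isMinOn hsne hQcont.continuousOn
  set m := ⟪H β₀ v₀, v₀⟫ with hm_def
  have hv₀ne : v₀ ≠ 0 := by
    intro h
    rw [mem_sphere_zero_iff_norm] at hv₀mem
    simp [h] at hv₀mem
  have hm : 0 < m := hHess β₀ v₀ hv₀ne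
  have hQ0 : ∀ v : EuclideanSpace ℝ (Fin p), m * ‖v‖ ^ 2 ≤ ⟪H β₀ v, v⟫ := by
    intro v
    rcases eq_or_ne v 0 with rfl | hv
    · simp
    · have hn : (0:ℝ) < ‖v‖ := norm_pos_iff.mpr hv
      have hmem : ‖v‖⁻¹ • v ∈ Metric.sphere (0 : EuclideanSpace ℝ (Fin p)) 1 := by
        rw [mem_sphere_zero_iff_norm, norm_smul]
        simp [abs_of_pos (inv_pos.mpr hn), inv_mul_cancel₀ hn.ne']
      have hle : m ≤ ⟪H β₀ (‖v‖⁻¹ • v), ‖v‖⁻¹ • v⟫ := hv₀min hmem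
      have h2 : ⟪H β₀ (‖v‖⁻¹ • v), ‖v‖⁻¹ • v⟫ = ‖v‖⁻¹ * (‖v‖⁻¹ * ⟪H β₀ v, v⟫) := by
        rw [map_smul, real_inner_smul_left, real_inner_smul_right]
      rw [h2] at hle
      have h3 := mul_le_mul_of_nonneg_left hle (mul_pos hn hn).le
      calc m * ‖v‖ ^ 2 = ‖v‖ * ‖v‖ * m := by ring
        _ ≤ ‖v‖ * ‖v‖ * (‖v‖⁻¹ * (‖v‖⁻¹ * ⟪H β₀ v, v⟫)) := h3
        _ = ⟪H β₀ v, v⟫ := by field_simp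
  -- choose ε by continuity of the Hessian
  obtain ⟨ε, hε, hball⟩ := Metric.continuousAt_iff.mp hHcont.continuousAt (m/2) (by positivity)
  set M : ℝ := ‖H β₀‖ + m/2 with hM_def
  have hM : 0 < M := by positivity
  have hlow : ∀ β : EuclideanSpace ℝ (Fin p), dist β β₀ < ε →
      ∀ v : EuclideanSpace ℝ (Fin p), m/2 * ‖v‖ ^ 2 ≤ ⟪H β v, v⟫ := by
    intro β hβ v
    have hd := hball hβ
    rw [dist_eq_norm] at hd
    have h1 : ⟪H β v, v⟫ = ⟪H β₀ v, v⟫ + ⟪(H β - H β₀) v, v⟫ := by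
      rw [ContinuousLinearMap.sub_apply, inner_sub_left]; ring
    have h2 : |⟪(H β - H β₀) v, v⟫| ≤ ‖H β - H β₀‖ * ‖v‖ * ‖v‖ := by
      calc |⟪(H β - H β₀) v, v⟫| ≤ ‖(H β - H β₀) v‖ * ‖v‖ := abs_real_inner_le_norm _ _
        _ ≤ ‖H β - H β₀‖ * ‖v‖ * ‖v‖ :=
          mul_le_mul_of_nonneg_right ((H β - H β₀).le_opNorm v) (norm_nonneg v)
    have h3 : ‖H β - H β₀‖ * ‖v‖ * ‖v‖ ≤ m/2 * (‖v‖ * ‖v‖) := by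
      nlinarith [norm_nonneg v, hd.le, norm_nonneg (H β - H β₀)]
    have h4 := hQ0 v
    have habs := abs_le.mp h2
    nlinarith [norm_nonneg v]
  have hup : ∀ β : EuclideanSpace ℝ (Fin p), dist β β₀ < ε →
      ∀ v : EuclideanSpace ℝ (Fin p), ⟪H β v, v⟫ ≤ M * ‖v‖ ^ 2 := by
    intro β hβ v
    have hd := hball hβ
    rw [dist_eq_norm] at hd
    have h1 : ⟪H β v, v⟫ ≤ ‖H β v‖ * ‖v‖ := real_inner_le_norm _ _
    have h2 : ‖H β v‖ ≤ ‖H β‖ * ‖v‖ := (H β).le_opNorm v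
    have h3 : ‖H β‖ ≤ M := by
      have := norm_sub_norm_le (H β) (H β₀)
      rw [hM_def]; linarith
    have h4 : ‖H β v‖ * ‖v‖ ≤ ‖H β‖ * ‖v‖ * ‖v‖ :=
      mul_le_mul_of_nonneg_right h2 (norm_nonneg v)
    have h5 : ‖H β‖ * ‖v‖ * ‖v‖ ≤ M * (‖v‖ * ‖v‖) := by
      rw [mul_assoc]
      exact mul_le_mul_of_nonneg_right h3 (mul_nonneg (norm_nonneg v) (norm_nonneg v))
    calc ⟪H β v, v⟫ ≤ ‖H β v‖ * ‖v‖ := h1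
      _ ≤ ‖H β‖ * ‖v‖ * ‖v‖ := h4
      _ ≤ M * (‖v‖ * ‖v‖) := h5
      _ = M * ‖v‖ ^ 2 := by ring
  -- final constants
  refine ⟨lam * m / (M/2 + lam), by positivity, ε, hε, ?_⟩
  intro Δ hΔ
  set α := lam * m / (M/2 + lam) with hα_def
  have hα : 0 < α := by positivity
  have hαval : α * (M/2 + lam) = lam * m := by
    rw [hα_def]; field_simp
  -- points on the segment are within ε of β₀
  have hseg : ∀ t ∈ Set.Icc (0:ℝ) 1, dist (β₀ + t • Δ) β₀ < ε := by
    intro t ht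
    have : dist (β₀ + t • Δ) β₀ = |t| * ‖Δ‖ := by
      rw [dist_eq_norm, add_sub_cancel_left, norm_smul, Real.norm_eq_abs]
    rw [this]
    have h1 : |t| ≤ 1 := abs_le.mpr ⟨by linarith [ht.1], ht.2⟩
    calc |t| * ‖Δ‖ ≤ 1 * ‖Δ‖ := mul_le_mul_of_nonneg_right h1 (norm_nonneg Δ)
      _ < ε := by rwa [one_mul]
  have hline : ∀ t : ℝ, HasDerivAt (fun s : ℝ => β₀ + s • Δ) Δ t := by
    intro t
    simpa using ((hasDerivAt_id t).smul_const Δ).const_add β₀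
  set ψ : ℝ → ℝ := fun t => ⟪S (β₀ + t • Δ), Δ⟫ with hψ_def
  have hψd : ∀ t : ℝ, HasDerivAt ψ ⟪H (β₀ + t • Δ) Δ, Δ⟫ t := by
    intro t
    have hcomp : HasDerivAt (fun s : ℝ => S (β₀ + s • Δ)) (H (β₀ + t • Δ) Δ) t :=
      (hSd _).comp_hasDerivAt t (hline t)
    have := HasDerivAt.inner ℝ hcomp (hasDerivAt_const t Δ)
    simpa using this
  have hψ0 : ψ 0 = 0 := by
    simp [hψ_def, hβ₀]
  clear_value S H m M ψ α
  -- lower bound on ψ 1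
  have hψ1 : m/2 * ‖Δ‖ ^ 2 ≤ ψ 1 := by
    have hmono := mono_helper (g := fun t => ψ t - t * (m/2 * ‖Δ‖ ^ 2))
      (g' := fun t => ⟪H (β₀ + t • Δ) Δ, Δ⟫ - m/2 * ‖Δ‖ ^ 2)
      (fun t => (hψd t).sub (hasDerivAt_mul_const _))
      (fun t ht => by
        have := hlow _ (hseg t ht) Δ
        linarith)
    have := hmono (Set.left_mem_Icc.mpr zero_le_one) (Set.right_mem_Icc.mpr zero_le_one)
      zero_le_one
    simp only [hψ0] at this
    linarith
  -- upper bound on ψ t for t ∈ [0,1]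
  have hψup : ∀ t ∈ Set.Icc (0:ℝ) 1, ψ t ≤ t * (M * ‖Δ‖ ^ 2) := by
    intro t ht
    have hmono := mono_helper (g := fun t => t * (M * ‖Δ‖ ^ 2) - ψ t)
      (g' := fun t => M * ‖Δ‖ ^ 2 - ⟪H (β₀ + t • Δ) Δ, Δ⟫)
      (fun t => (hasDerivAt_mul_const _).sub (hψd t))
      (fun t ht => by
        have := hup _ (hseg t ht) Δ
        linarith)
    have := hmono (Set.left_mem_Icc.mpr zero_le_one) ht ht.1
    simp only [hψ0] at this
    linarith
  -- upper bound on the increment of L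
  have hhd : ∀ t : ℝ, HasDerivAt (fun s : ℝ => L (β₀ + s • Δ)) (ψ t) t := by
    intro t
    have := (hfd (β₀ + t • Δ)).comp_hasDerivAt t (hline t)
    simpa [hψ_def, InnerProductSpace.toDual_apply_apply, Function.comp_def] using this
  have hLub : L (β₀ + Δ) - L β₀ ≤ M/2 * ‖Δ‖ ^ 2 := by
    have hmono := mono_helper (g := fun t => t ^ 2 * (M/2 * ‖Δ‖ ^ 2) - L (β₀ + t • Δ))
      (g' := fun t => 2 * t * (M/2 * ‖Δ‖ ^ 2) - ψ t)
      (fun t => by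
        have h1 : HasDerivAt (fun s : ℝ => s ^ 2 * (M/2 * ‖Δ‖ ^ 2))
            (2 * t * (M/2 * ‖Δ‖ ^ 2)) t := by
          have h0 := (hasDerivAt_pow 2 t).mul_const (M/2 * ‖Δ‖ ^ 2)
          refine h0.congr_deriv ?_
          push_cast
          ring
        exact h1.sub (hhd t))
      (fun t ht => by
        have := hψup t ht
        have h2 : 2 * t * (M/2 * ‖Δ‖ ^ 2) = t * (M * ‖Δ‖ ^ 2) := by ring
        linarith)
    have := hmono (Set.left_mem_Icc.mpr zero_le_one) (Set.right_mem_Icc.mpr zero_le_one)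
      zero_le_one
    simp only [one_pow, zero_pow, zero_smul, add_zero, one_smul, zero_mul] at this
    linarith
  -- the gradient of Llam
  have hgrad : gradient (fun Δ => L (β₀ + Δ) - L β₀ + lam * ‖Δ‖ ^ 2) Δ
      = S (β₀ + Δ) + (2 * lam) • Δ := by
    have h1 : HasFDerivAt (fun d : EuclideanSpace ℝ (Fin p) => L (β₀ + d))
        (InnerProductSpace.toDual ℝ (EuclideanSpace ℝ (Fin p)) (S (β₀ + Δ))) Δ := by
      have := (hfd (β₀ + Δ)).comp Δ ((hasFDerivAt_id Δ).const_add β₀)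
      simpa [Function.comp_def] using this
    have h2 := (hasStrictFDerivAt_norm_sq Δ).hasFDerivAt
    have h4 := (h1.sub_const (L β₀)).add (h2.const_mul lam)
    have h5 : (InnerProductSpace.toDual ℝ (EuclideanSpace ℝ (Fin p)) (S (β₀ + Δ))
          + lam • (2 • innerSL ℝ Δ))
        = InnerProductSpace.toDual ℝ (EuclideanSpace ℝ (Fin p))
          (S (β₀ + Δ) + (2 * lam) • Δ) := by
      ext v
      simp [InnerProductSpace.toDual_apply_apply, inner_add_left, real_inner_smul_left]
      ring
    rw [h5] at h4
    exact (hasGradientAt_iff_hasFDerivAt.mpr h4).gradient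
  rw [hgrad]
  have hinner : ⟪S (β₀ + Δ) + (2 * lam) • Δ, S (β₀ + Δ)⟫
      = ⟪S (β₀ + Δ), S (β₀ + Δ)⟫ + 2 * lam * ψ 1 := by
    have hcomm : ⟪Δ, S (β₀ + Δ)⟫ = ψ 1 := by
      have h6 : ψ 1 = ⟪S (β₀ + Δ), Δ⟫ := by simp [hψ_def]
      rw [h6]
      exact real_inner_comm _ _
    rw [inner_add_left, real_inner_smul_left, hcomm]
  rw [hinner]
  have hpos : (0:ℝ) ≤ ⟪S (β₀ + Δ), S (β₀ + Δ)⟫ := real_inner_self_nonneg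
  have hsq : (0:ℝ) ≤ ‖Δ‖ ^ 2 := by positivity
  have key : α * (M/2 + lam) * ‖Δ‖ ^ 2 = lam * m * ‖Δ‖ ^ 2 := by rw [hαval]
  show α * (L (β₀ + Δ) - L β₀ + lam * ‖Δ‖ ^ 2) ≤ _
  nlinarith [mul_le_mul_of_nonneg_left hLub hα.le,
    mul_le_mul_of_nonneg_left hψ1 (by positivity : (0:ℝ) ≤ 2 * lam)]
end

section
/- Let p ≥ 1, let L : ℝ^p → ℝ be twice continuously differentiable with gradient S = ∇L, whose Hessian ∇²L(β) is positive definite at every β ∈ ℝ^p, and let β₀ ∈ ℝ^p satisfy S(β₀) = 0. Fix λ > 0 and define the Lyapunov function L_λ(Δ) = L(β₀ + Δ) − L(β₀) + λ‖Δ‖², where ‖·‖ is the Euclidean norm. Then for every M > 0 there exists α_M > 0 such that ⟨∇L_λ(Δ), S(β₀ + Δ)⟩ ≥ α_M·L_λ(Δ) for all Δ with ‖Δ‖ ≤ M. -/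
set_option maxHeartbeats 1000000

open scoped RealInnerProductSpace

/-- the uniform-on-balls Lyapunov bound: for every `M > 0` there is
`α_M > 0` with `⟨∇L_λ(Δ), S(β₀+Δ)⟩ ≥ α_M·L_λ(Δ)` for all `‖Δ‖ ≤ M`. -/
theorem stmt3 (p : ℕ) (hp : 1 ≤ p)
    (L : EuclideanSpace ℝ (Fin p) → ℝ) (hL : ContDiff ℝ 2 L)
    (hHess : ∀ β v : EuclideanSpace ℝ (Fin p),
      v ≠ 0 → 0 < ⟪fderiv ℝ (gradient L) β v, v⟫)
    (β₀ : EuclideanSpace ℝ (Fin p)) (hβ₀ : gradient L β₀ = 0)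
    (lam : ℝ) (hlam : 0 < lam)
    (Llam : EuclideanSpace ℝ (Fin p) → ℝ)
    (hLlam : ∀ Δ, Llam Δ = L (β₀ + Δ) - L β₀ + lam * ‖Δ‖ ^ 2) :
    ∀ M : ℝ, 0 < M → ∃ αM : ℝ, 0 < αM ∧
      ∀ Δ : EuclideanSpace ℝ (Fin p), ‖Δ‖ ≤ M →
        αM * Llam Δ ≤ ⟪gradient Llam Δ, gradient L (β₀ + Δ)⟫ := by
  intro M hM
  -- the gradient is C¹
  have hS : ContDiff ℝ 1 (gradient L) := by
    have h1 : ContDiff ℝ 1 (fderiv ℝ L) := hL.fderiv_right (by norm_num)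
    exact (((InnerProductSpace.toDual ℝ (EuclideanSpace ℝ (Fin p))).symm).contDiff).comp h1
  have hSdiff : Differentiable ℝ (gradient L) := hS.differentiable one_ne_zero
  have hHcont : Continuous (fun β => fderiv ℝ (gradient L) β) :=
    hS.continuous_fderiv one_ne_zero
  have hLdiff : Differentiable ℝ L := (hL.differentiable (by norm_num))
  -- the quadratic-form function on pairs
  set F : EuclideanSpace ℝ (Fin p) × EuclideanSpace ℝ (Fin p) → ℝ := fun q => ⟪fderiv ℝ (gradient L) q.1 q.2, q.2⟫ with hF
  have hFcont : Continuous F := by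
    have h1 : Continuous (fun q : EuclideanSpace ℝ (Fin p) × EuclideanSpace ℝ (Fin p) => fderiv ℝ (gradient L) q.1 q.2) :=
      isBoundedBilinearMap_apply.continuous.comp
        ((hHcont.comp continuous_fst).prodMk continuous_snd)
    exact h1.inner continuous_snd
  -- the compact set
  set K : Set (EuclideanSpace ℝ (Fin p) × EuclideanSpace ℝ (Fin p)) := (Metric.closedBall β₀ M) ×ˢ (Metric.sphere (0 : EuclideanSpace ℝ (Fin p)) 1) with hK
  have hKc : IsCompact K :=
    (isCompact_closedBall β₀ M).prod (isCompact_sphere 0 1)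
  have hKne : K.Nonempty := by
    refine ⟨(β₀, EuclideanSpace.single ⟨0, hp⟩ (1 : ℝ)), ?_, ?_⟩
    · simp [hM.le]
    · simp [EuclideanSpace.norm_single]
  obtain ⟨q0, hq0K, hq0min'⟩ := hKc.exists_isMinOn hKne hFcont.continuousOn
  have hq0min : ∀ q ∈ K, F q0 ≤ F q := fun q hq => hq0min' hq
  set μ : ℝ := F q0 with hμ
  have hq0ne : q0.2 ≠ 0 := by
    have h1 : ‖q0.2‖ = 1 := by
      have := hq0K.2; simpa using this
    intro h; rw [h] at h1; simp at h1
  have hμpos : 0 < μ := hHess q0.1 q0.2 hq0ne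
  -- uniform quadratic lower bound on the ball
  have hquad : ∀ β v : EuclideanSpace ℝ (Fin p), β ∈ Metric.closedBall β₀ M → v ≠ 0 →
      μ * ‖v‖ ^ 2 ≤ ⟪fderiv ℝ (gradient L) β v, v⟫ := by
    intro β v hβ hv
    have hvn : (0 : ℝ) < ‖v‖ := norm_pos_iff.mpr hv
    set u : EuclideanSpace ℝ (Fin p) := ‖v‖⁻¹ • v with hu
    have hun : ‖u‖ = 1 := by
      rw [hu, norm_smul]
      simp [abs_of_pos (inv_pos.mpr hvn), inv_mul_cancel₀ hvn.ne']
    have hmem : (β, u) ∈ K := ⟨hβ, by simpa using hun⟩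
    have hge : μ ≤ F (β, u) := hq0min _ hmem
    have hveq : v = ‖v‖ • u := by
      rw [hu, smul_smul, mul_inv_cancel₀ hvn.ne', one_smul]
    have hexp : ⟪fderiv ℝ (gradient L) β v, v⟫ = ‖v‖ ^ 2 * F (β, u) := by
      conv_lhs => rw [hveq]
      rw [map_smul, real_inner_smul_left, real_inner_smul_right]
      ring
    rw [hexp]
    nlinarith [sq_nonneg ‖v‖]
  -- choose αM
  refine ⟨min (2 * lam) (μ ^ 2 / lam), lt_min (by linarith) (by positivity), ?_⟩
  intro Δ hΔM
  rcases eq_or_ne Δ 0 with rfl | hΔ0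
  · simp [hLlam 0, hβ₀]
  have hΔn : (0 : ℝ) < ‖Δ‖ := norm_pos_iff.mpr hΔ0
  -- one-dimensional auxiliary functions along the segment
  set g : ℝ → ℝ := fun t => ⟪gradient L (β₀ + t • Δ), Δ⟫ with hgdef
  set f : ℝ → ℝ := fun t => L (β₀ + t • Δ) with hfdef
  have hline : ∀ t : ℝ, HasDerivAt (fun s : ℝ => β₀ + s • Δ) Δ t := by
    intro t
    simpa using ((hasDerivAt_id t).smul_const Δ).const_add β₀
  have hg' : ∀ t : ℝ, HasDerivAt g
      (⟪fderiv ℝ (gradient L) (β₀ + t • Δ) Δ, Δ⟫) t := by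
    intro t
    have h1 : HasDerivAt (fun s : ℝ => gradient L (β₀ + s • Δ))
        (fderiv ℝ (gradient L) (β₀ + t • Δ) Δ) t := by
      have := (hSdiff (β₀ + t • Δ)).hasFDerivAt.comp_hasDerivAt t (hline t); exact this
    have := h1.inner ℝ (hasDerivAt_const t Δ)
    simpa only [inner_zero_right, inner_zero_left, zero_add, add_zero] using this
  have hf' : ∀ t : ℝ, HasDerivAt f (g t) t := by
    intro t
    have h1 : HasDerivAt f (fderiv ℝ L (β₀ + t • Δ) Δ) t :=
      (hLdiff (β₀ + t • Δ)).hasFDerivAt.comp_hasDerivAt t (hline t)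
    have h2 : fderiv ℝ L (β₀ + t • Δ) Δ = g t :=
      (InnerProductSpace.toDual_symm_apply).symm
    rwa [h2] at h1
  have hgcont : Continuous g :=
    continuous_iff_continuousAt.mpr fun t => (hg' t).continuousAt
  have hfcont : Continuous f :=
    continuous_iff_continuousAt.mpr fun t => (hf' t).continuousAt
  have hg0 : g 0 = 0 := by simp only [hgdef, zero_smul, add_zero, hβ₀, inner_zero_left]
  have hg1 : g 1 = ⟪gradient L (β₀ + Δ), Δ⟫ := by simp [hgdef]
  -- the derivative of g is bounded below on (0,1)
  have hgd : ∀ t ∈ Set.Ioo (0 : ℝ) 1,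
      μ * ‖Δ‖ ^ 2 ≤ ⟪fderiv ℝ (gradient L) (β₀ + t • Δ) Δ, Δ⟫ := by
    intro t ht
    apply hquad _ _ _ hΔ0
    rw [Metric.mem_closedBall, dist_eq_norm]
    have : β₀ + t • Δ - β₀ = t • Δ := by abel
    rw [this, norm_smul]
    have h1 : |t| ≤ 1 := by
      rw [abs_of_pos ht.1]; exact ht.2.le
    calc |t| * ‖Δ‖ ≤ 1 * ‖Δ‖ := by
          exact mul_le_mul_of_nonneg_right h1 (norm_nonneg Δ)
      _ = ‖Δ‖ := one_mul _
      _ ≤ M := hΔM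
  -- MVT for f on [0,1]: L(β₀+Δ) - L β₀ = g c
  obtain ⟨c, hc, hceq⟩ :=
    exists_hasDerivAt_eq_slope f g one_pos hfcont.continuousOn (fun x _ => hf' x)
  have hD : L (β₀ + Δ) - L β₀ = g c := by
    rw [hceq]; simp [hfdef]
  -- MVT for g on [0,1]: g 1 ≥ μ‖Δ‖²
  have hg1ge : μ * ‖Δ‖ ^ 2 ≤ g 1 := by
    obtain ⟨e, he, heeq⟩ := exists_hasDerivAt_eq_slope g
      (fun t => ⟪fderiv ℝ (gradient L) (β₀ + t • Δ) Δ, Δ⟫) one_pos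
      hgcont.continuousOn (fun x _ => hg' x)
    have h1 := hgd e he
    rw [heeq] at h1
    rw [hg0] at h1
    simpa using h1
  -- MVT for g on [c,1]: g c ≤ g 1
  have hgc_le : g c ≤ g 1 := by
    obtain ⟨d, hd, hdeq⟩ := exists_hasDerivAt_eq_slope g
      (fun t => ⟪fderiv ℝ (gradient L) (β₀ + t • Δ) Δ, Δ⟫) hc.2
      hgcont.continuousOn (fun x _ => hg' x)
    have h1 := hgd d ⟨lt_trans hc.1 hd.1, hd.2⟩
    rw [hdeq] at h1
    have h2 : 0 < 1 - c := by linarith [hc.2]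
    have h4 := (le_div_iff₀ h2).mp h1
    nlinarith [mul_pos (mul_pos hμpos (pow_pos hΔn 2)) h2]
  -- MVT for g on [0,c]: 0 ≤ g c
  have hgc_nonneg : 0 ≤ g c := by
    obtain ⟨d, hd, hdeq⟩ := exists_hasDerivAt_eq_slope g
      (fun t => ⟪fderiv ℝ (gradient L) (β₀ + t • Δ) Δ, Δ⟫) hc.1
      hgcont.continuousOn (fun x _ => hg' x)
    have h1 := hgd d ⟨hd.1, lt_trans hd.2 hc.2⟩
    rw [hdeq, hg0] at h1
    simp only [sub_zero] at h1
    have h4 := (le_div_iff₀ hc.1).mp h1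
    nlinarith [mul_pos (mul_pos hμpos (pow_pos hΔn 2)) hc.1]
  -- the gradient of the Lyapunov function
  have hgrad : gradient Llam Δ = gradient L (β₀ + Δ) + (2 * lam) • Δ := by
    have hfun : Llam = fun x => L (β₀ + x) - L β₀ + lam * ‖x‖ ^ 2 := funext hLlam
    have hga : HasGradientAt Llam (gradient L (β₀ + Δ) + (2 * lam) • Δ) Δ := by
      rw [hfun, hasGradientAt_iff_hasFDerivAt]
      have hadd : HasFDerivAt (fun x : EuclideanSpace ℝ (Fin p) => β₀ + x) (ContinuousLinearMap.id ℝ (EuclideanSpace ℝ (Fin p))) Δ := by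
        simpa using (hasFDerivAt_id Δ).const_add β₀
      have h1 : HasFDerivAt (fun x : EuclideanSpace ℝ (Fin p) => L (β₀ + x)) (fderiv ℝ L (β₀ + Δ)) Δ := by
        have := (hLdiff (β₀ + Δ)).hasFDerivAt.comp Δ hadd; rw [ContinuousLinearMap.comp_id] at this; exact this
      have h2 : HasFDerivAt (fun x : EuclideanSpace ℝ (Fin p) => ‖x‖ ^ 2) (2 • (innerSL ℝ Δ)) Δ :=
        (hasStrictFDerivAt_norm_sq Δ).hasFDerivAt
      have h3 := (h1.sub_const (L β₀)).add (h2.const_mul lam)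
      have heq : (InnerProductSpace.toDual ℝ (EuclideanSpace ℝ (Fin p)))
          (gradient L (β₀ + Δ) + (2 * lam) • Δ)
          = fderiv ℝ L (β₀ + Δ) + lam • (2 • (innerSL ℝ Δ)) := by
        ext y
        have h4 : ⟪gradient L (β₀ + Δ), y⟫ = fderiv ℝ L (β₀ + Δ) y :=
          InnerProductSpace.toDual_symm_apply
        simp only [InnerProductSpace.toDual_apply_apply, inner_add_left, real_inner_smul_left,
          ContinuousLinearMap.add_apply, ContinuousLinearMap.coe_smul', Pi.smul_apply,
          ContinuousLinearMap.smul_apply, innerSL_apply_apply, smul_eq_mul, two_smul, h4]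
        ring
      rw [heq]
      exact h3
    exact hga.gradient
  rw [hgrad, hLlam Δ]
  set S : EuclideanSpace ℝ (Fin p) := gradient L (β₀ + Δ) with hSdef
  have hinner : ⟪S + (2 * lam) • Δ, S⟫ = ‖S‖ ^ 2 + 2 * lam * g 1 := by
    rw [inner_add_left, real_inner_smul_left, real_inner_self_eq_norm_sq]
    have : g 1 = ⟪Δ, S⟫ := by rw [hg1, real_inner_comm]
    rw [this]
  rw [hinner]
  -- Cauchy–Schwarz gives a lower bound on ‖S‖
  have hCS : g 1 ≤ ‖S‖ * ‖Δ‖ := by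
    rw [hg1]; exact real_inner_le_norm S Δ
  have h5 : μ * ‖Δ‖ ≤ ‖S‖ := by
    have h6 := hg1ge.trans hCS
    nlinarith
  have hSsq : μ ^ 2 * ‖Δ‖ ^ 2 ≤ ‖S‖ ^ 2 := by
    nlinarith [mul_le_mul h5 h5 (by positivity) (norm_nonneg S)]
  have hD1 : L (β₀ + Δ) - L β₀ ≤ g 1 := hD ▸ hgc_le
  have hD0 : 0 ≤ L (β₀ + Δ) - L β₀ := hD ▸ hgc_nonneg
  have hα1 : min (2 * lam) (μ ^ 2 / lam) ≤ 2 * lam := min_le_left _ _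
  have hα0 : 0 ≤ min (2 * lam) (μ ^ 2 / lam) := le_min (by linarith) (by positivity)
  have hα2 : min (2 * lam) (μ ^ 2 / lam) * lam ≤ μ ^ 2 := by
    have h := min_le_right (2 * lam) (μ ^ 2 / lam)
    calc min (2 * lam) (μ ^ 2 / lam) * lam ≤ (μ ^ 2 / lam) * lam :=
          mul_le_mul_of_nonneg_right h hlam.le
      _ = μ ^ 2 := by field_simp
  nlinarith [mul_le_mul_of_nonneg_right hα1 hD0,
    mul_le_mul_of_nonneg_right hα2 (sq_nonneg ‖Δ‖),
    mul_le_mul_of_nonneg_left hD1 (by linarith : (0:ℝ) ≤ 2 * lam),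
    sq_nonneg ‖Δ‖]
end

section
/- Let p ≥ 1 and let H₀ be a symmetric positive definite real p×p matrix. Let γ_i = γ₁ i^{−α} with γ₁ > 0 and α ∈ (0.5, 1). For integers 1 ≤ j ≤ n define A_j^n = γ_j ∑_{i=j}^n ∏_{l=j+1}^i (I − γ_l H₀) (with the empty product ∏_{l=j+1}^j (I − γ_l H₀) = I) and B_j^n = A_j^n − H₀⁻¹. Then there exists a constant M > 0 such that ‖B_j^n‖ ≤ M for all j and all n ≥ j, where ‖·‖ denotes the operator norm of a matrix. -/
open Filter Matrix
open scoped Matrix.Norms.L2Operator RealInnerProductSpace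

/-! ### Auxiliary scalar lemmas -/

lemma pjSumprod_rec (β : ℕ → ℝ) {j n : ℕ} (h : j < n) :
    (∑ i ∈ Finset.Icc j n, ∏ l ∈ Finset.Icc (j+1) i, β l)
      = 1 + β (j+1) * ∑ i ∈ Finset.Icc (j+1) n, ∏ l ∈ Finset.Icc (j+2) i, β l := by
  rw [← Finset.Ico_add_one_right_eq_Icc, Finset.sum_eq_sum_Ico_succ_bot (by omega)]
  have h1 : (∏ l ∈ Finset.Icc (j+1) j, β l) = 1 := by
    rw [Finset.Icc_eq_empty (by omega), Finset.prod_empty]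
  rw [h1]
  congr 1
  rw [Finset.Ico_add_one_right_eq_Icc, Finset.mul_sum]
  apply Finset.sum_congr rfl
  intro i hi
  have hji : j + 1 ≤ i := (Finset.mem_Icc.mp hi).1
  rw [← Finset.Ico_add_one_right_eq_Icc, Finset.prod_eq_prod_Ico_succ_bot (by omega), Finset.Ico_add_one_right_eq_Icc]

lemma pjSumprod_nonneg (β : ℕ → ℝ) (hβ : ∀ l, 0 ≤ β l) (j n : ℕ) :
    0 ≤ ∑ i ∈ Finset.Icc j n, ∏ l ∈ Finset.Icc (j+1) i, β l :=
  Finset.sum_nonneg fun _ _ => Finset.prod_nonneg fun l _ => hβ l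

lemma pjSumprod_self (β : ℕ → ℝ) (j : ℕ) :
    (∑ i ∈ Finset.Icc j j, ∏ l ∈ Finset.Icc (j+1) i, β l) = 1 := by
  rw [Finset.Icc_self, Finset.sum_singleton, Finset.Icc_eq_empty (by omega),
    Finset.prod_empty]

section GammaFacts
variable (γ₁ α : ℝ) (γ : ℕ → ℝ)

lemma pjGamma_pos (hγ₁ : 0 < γ₁) (hγ : ∀ i : ℕ, γ i = γ₁ * (i : ℝ) ^ (-α))
    {j : ℕ} (hj : 1 ≤ j) : 0 < γ j := by
  rw [hγ]
  have : (0:ℝ) < (j:ℝ) := by exact_mod_cast hj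
  positivity

lemma pjGamma_le (hγ₁ : 0 < γ₁) (hα : 0 < α) (hγ : ∀ i : ℕ, γ i = γ₁ * (i : ℝ) ^ (-α))
    {j : ℕ} (hj : 1 ≤ j) : γ j ≤ γ₁ := by
  rw [hγ]
  have h1 : (1:ℝ) ≤ (j:ℝ) := by exact_mod_cast hj
  have := Real.rpow_le_one_of_one_le_of_nonpos h1 (by linarith : -α ≤ 0)
  nlinarith

lemma pjGamma_id (hγ₁ : 0 < γ₁) (hγ : ∀ i : ℕ, γ i = γ₁ * (i : ℝ) ^ (-α))
    {m : ℕ} (hm : 1 ≤ m) : (m:ℝ) * γ m = γ₁ * (m:ℝ) ^ (1-α) := by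
  have hm0 : (0:ℝ) < (m:ℝ) := by exact_mod_cast hm
  have hsplit : (m:ℝ)^(1-α) = (m:ℝ) * (m:ℝ)^(-α) := by
    rw [show (1-α) = 1 + (-α) by ring, Real.rpow_add hm0, Real.rpow_one]
  rw [hγ, hsplit]
  ring

lemma pjGamma_mono (hγ₁ : 0 < γ₁) (hα : 0 < α) (hα1 : α ≤ 1)
    (hγ : ∀ i : ℕ, γ i = γ₁ * (i : ℝ) ^ (-α))
    {j : ℕ} (hj : 1 ≤ j) : (j:ℝ) * γ j ≤ ((j:ℝ)+1) * γ (j+1) := by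
  have hj0 : (0:ℝ) < (j:ℝ) := by exact_mod_cast hj
  rw [pjGamma_id γ₁ α γ hγ₁ hγ hj, show ((j:ℝ)+1) = ((j+1:ℕ):ℝ) by push_cast; ring,
    pjGamma_id γ₁ α γ hγ₁ hγ (by omega : 1 ≤ j+1)]
  have : (j:ℝ) ^ (1-α) ≤ ((j+1:ℕ):ℝ) ^ (1-α) := by
    apply Real.rpow_le_rpow (le_of_lt hj0) (by push_cast; linarith) (by linarith)
  nlinarith

lemma pjGamma_two (hγ₁ : 0 < γ₁) (hα : 0 < α) (hα1 : α ≤ 1)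
    (hγ : ∀ i : ℕ, γ i = γ₁ * (i : ℝ) ^ (-α))
    {j : ℕ} (hj : 1 ≤ j) : γ j ≤ 2 * γ (j+1) := by
  have h1 := pjGamma_mono γ₁ α γ hγ₁ hα hα1 hγ hj
  have h2 : 0 < γ (j+1) := pjGamma_pos γ₁ α γ hγ₁ hγ (by omega)
  have hj0 : (1:ℝ) ≤ (j:ℝ) := by exact_mod_cast hj
  nlinarith

lemma pjGood_region (μ' : ℝ) (β : ℕ → ℝ) (N : ℕ) (hN : 1 ≤ N)
    (hγ₁ : 0 < γ₁) (hα : 0 < α) (hα1 : α ≤ 1) (hμ' : 0 < μ')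
    (hγ : ∀ i : ℕ, γ i = γ₁ * (i : ℝ) ^ (-α))
    (hβ : ∀ l, N < l → β l = 1 - μ' * γ l)
    (hβnn : ∀ l, 0 ≤ β l)
    (hcond : ∀ j : ℕ, N ≤ j → 2 ≤ μ' * (j:ℝ) * γ (j+1)) :
    ∀ k j, N ≤ j → γ j * (∑ i ∈ Finset.Icc j (j+k), ∏ l ∈ Finset.Icc (j+1) i, β l)
      ≤ γ₁ + 4/μ' := by
  intro k
  induction k with
  | zero =>
    intro j hj
    rw [Nat.add_zero, pjSumprod_self, mul_one]
    have := pjGamma_le γ₁ α γ hγ₁ hα hγ (le_trans hN hj)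
    have h4 : 0 < 4/μ' := by positivity
    linarith
  | succ k ih =>
    intro j hj
    have hj1 : 1 ≤ j := le_trans hN hj
    have hγjpos := pjGamma_pos γ₁ α γ hγ₁ hγ hj1
    have hγj1pos := pjGamma_pos γ₁ α γ hγ₁ hγ (by omega : 1 ≤ j+1)
    rw [pjSumprod_rec β (by omega : j < j + (k+1))]
    have hrec : j + (k+1) = (j+1) + k := by omega
    rw [hrec]
    have ihj := ih (j+1) (by omega)
    set R' := ∑ i ∈ Finset.Icc (j+1) ((j+1)+k), ∏ l ∈ Finset.Icc (j+2) i, β l with hR'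
    have hIcc : ∀ i : ℕ, Finset.Icc (j+1+1) i = Finset.Icc (j+2) i := fun i => rfl
    have ihj' : γ (j+1) * R' ≤ γ₁ + 4/μ' := by
      rw [hR']
      simpa [hIcc] using ihj
    have hR'nn : 0 ≤ R' := pjSumprod_nonneg β hβnn _ _
    set x := μ' * γ (j+1) with hx
    have hβj1 : β (j+1) = 1 - x := hβ (j+1) (by omega)
    have hx0 : 0 ≤ 1 - x := by rw [← hβj1]; exact hβnn _
    have hxpos : 0 < x := by positivity
    have hkey : 2 ≤ (j:ℝ) * x := by
      have := hcond j hj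
      rw [hx]; nlinarith
    have hmono := pjGamma_mono γ₁ α γ hγ₁ hα hα1 hγ hj1
    have hγ2 := pjGamma_two γ₁ α γ hγ₁ hα hα1 hγ hj1
    have hγle := pjGamma_le γ₁ α γ hγ₁ hα hγ hj1
    have hj0 : (0:ℝ) < (j:ℝ) := by exact_mod_cast hj1
    have s2 : ((j:ℝ)+1)*(1-x) ≤ (j:ℝ)*(1-x/2) := by nlinarith
    have s3 : ((j:ℝ)+1)*γ (j+1)*(1-x) ≤ (j:ℝ)*γ (j+1)*(1-x/2) := by nlinarith
    have s1 : (j:ℝ)*γ j*(1-x) ≤ ((j:ℝ)+1)*γ (j+1)*(1-x) := by nlinarith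
    have step1 : γ j * (1-x) ≤ γ (j+1) * (1-x/2) := by
      have : (j:ℝ) * (γ j * (1-x)) ≤ (j:ℝ) * (γ (j+1) * (1-x/2)) := by nlinarith
      exact le_of_mul_le_mul_left this hj0
    have step2 : γ j * (1-x) * R' ≤ γ (j+1) * (1-x/2) * R' :=
      mul_le_mul_of_nonneg_right step1 hR'nn
    have hx1 : x ≤ 1 := by linarith
    have step3 : γ (j+1) * (1-x/2) * R' ≤ (1-x/2) * (γ₁ + 4/μ') := by
      have h12 : 0 ≤ 1 - x/2 := by linarith
      calc γ (j+1) * (1-x/2) * R' = (1-x/2) * (γ (j+1) * R') := by ring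
        _ ≤ (1-x/2) * (γ₁ + 4/μ') := mul_le_mul_of_nonneg_left ihj' h12
    have step4 : γ j ≤ (x/2) * (γ₁ + 4/μ') := by
      have e1 : (x/2) * (4/μ') = 2 * γ (j+1) := by
        rw [hx]; field_simp; ring
      nlinarith
    rw [hβj1]
    calc γ j * (1 + (1-x) * R') = γ j + γ j * (1-x) * R' := by ring
      _ ≤ (x/2) * (γ₁ + 4/μ') + (1-x/2) * (γ₁ + 4/μ') := by
          have := le_trans step2 step3
          linarith
      _ = γ₁ + 4/μ' := by ring

lemma pjMaster (μ' K : ℝ) (β : ℕ → ℝ) (N : ℕ) (hN : 1 ≤ N)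
    (hγ₁ : 0 < γ₁) (hα : 0 < α) (hα1 : α ≤ 1) (hμ' : 0 < μ') (hK : 1 ≤ K)
    (hγ : ∀ i : ℕ, γ i = γ₁ * (i : ℝ) ^ (-α))
    (hβ : ∀ l, N < l → β l = 1 - μ' * γ l)
    (hβnn : ∀ l, 0 ≤ β l)
    (hβK : ∀ l, β l ≤ K)
    (hcond : ∀ j : ℕ, N ≤ j → 2 ≤ μ' * (j:ℝ) * γ (j+1)) :
    ∀ k j n, 1 ≤ j → j ≤ n → N ≤ j + k →
      γ j * (∑ i ∈ Finset.Icc j n, ∏ l ∈ Finset.Icc (j+1) i, β l)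
        ≤ (1+2*K)^k * (γ₁ + 4/μ') := by
  have hC : 0 < γ₁ + 4/μ' := by positivity
  have h2K : (1:ℝ) ≤ 1 + 2*K := by linarith
  intro k
  induction k with
  | zero =>
    intro j n hj hjn hNj
    rw [pow_zero, one_mul]
    have hn : n = j + (n - j) := by omega
    rw [hn]
    exact pjGood_region γ₁ α γ μ' β N hN hγ₁ hα hα1 hμ' hγ hβ hβnn hcond (n-j) j (by omega)
  | succ k ih =>
    intro j n hj hjn hNj
    have hpowk : (1:ℝ) ≤ (1+2*K)^k := one_le_pow₀ h2K
    have hpowk1 : (1:ℝ) ≤ (1+2*K)^(k+1) := one_le_pow₀ h2K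
    by_cases hNle : N ≤ j
    · have hn : n = j + (n - j) := by omega
      rw [hn]
      have := pjGood_region γ₁ α γ μ' β N hN hγ₁ hα hα1 hμ' hγ hβ hβnn hcond (n-j) j hNle
      nlinarith
    · by_cases hjeq : j = n
      · subst hjeq
        rw [pjSumprod_self, mul_one]
        have := pjGamma_le γ₁ α γ hγ₁ hα hγ hj
        have h4 : 0 < 4/μ' := by positivity
        nlinarith [mul_le_mul_of_nonneg_right hpowk1 hC.le]
      · have hjn' : j < n := by omega
        rw [pjSumprod_rec β hjn']
        have ihj := ih (j+1) n (by omega) (by omega) (by omega)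
        set R' := ∑ i ∈ Finset.Icc (j+1) n, ∏ l ∈ Finset.Icc (j+2) i, β l with hR'
        have ihj' : γ (j+1) * R' ≤ (1+2*K)^k * (γ₁ + 4/μ') := by
          rw [hR']
          have hIcc : ∀ i : ℕ, Finset.Icc (j+1+1) i = Finset.Icc (j+2) i := fun i => rfl
          simpa [hIcc] using ihj
        have hR'nn : 0 ≤ R' := pjSumprod_nonneg β hβnn _ _
        have hγ2 := pjGamma_two γ₁ α γ hγ₁ hα hα1 hγ hj
        have hγjpos := pjGamma_pos γ₁ α γ hγ₁ hγ hj
        have hγj1pos := pjGamma_pos γ₁ α γ hγ₁ hγ (by omega : 1 ≤ j+1)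
        have hγle := pjGamma_le γ₁ α γ hγ₁ hα hγ hj
        have hb1 : γ j * β (j+1) * R' ≤ 2*K*(γ (j+1) * R') := by
          have h1 : γ j * β (j+1) ≤ 2 * γ (j+1) * K := by
            have := hβK (j+1)
            have := hβnn (j+1)
            nlinarith
          nlinarith
        have hb2 : 2*K*(γ (j+1) * R') ≤ 2*K*((1+2*K)^k * (γ₁ + 4/μ')) :=
          mul_le_mul_of_nonneg_left ihj' (by linarith)
        calc γ j * (1 + β (j+1) * R') = γ j + γ j * β (j+1) * R' := by ring
          _ ≤ γ₁ + 2*K*((1+2*K)^k * (γ₁ + 4/μ')) := by linarith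
          _ ≤ (1+2*K)^k * (γ₁ + 4/μ') + 2*K*((1+2*K)^k * (γ₁ + 4/μ')) := by
              have h4 : 0 < 4/μ' := by positivity
              nlinarith [mul_le_mul_of_nonneg_right hpowk hC.le]
          _ = (1+2*K)^(k+1) * (γ₁ + 4/μ') := by ring

end GammaFacts

/-! ### Auxiliary matrix lemmas -/

lemma pjPosdef_inner_bound {p : ℕ} (hp : 1 ≤ p) (H : Matrix (Fin p) (Fin p) ℝ)
    (hH : H.PosDef) :
    ∃ μ : ℝ, 0 < μ ∧ ∀ x : EuclideanSpace ℝ (Fin p),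
      μ * ‖x‖ ^ 2 ≤ ⟪x, (Matrix.toEuclideanLin H) x⟫ := by
  haveI : Nonempty (Fin p) := ⟨⟨0, hp⟩⟩
  set T : EuclideanSpace ℝ (Fin p) →L[ℝ] EuclideanSpace ℝ (Fin p) :=
    LinearMap.toContinuousLinearMap (Matrix.toEuclideanLin H) with hT
  have hTapp : ∀ x, T x = Matrix.toEuclideanLin H x := fun x => rfl
  have hpos : ∀ x : EuclideanSpace ℝ (Fin p), x ≠ 0 → 0 < ⟪x, T x⟫ := by
    intro x hx
    have hx' : (WithLp.equiv 2 (Fin p → ℝ)) x ≠ 0 := by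
      simpa using hx
    have := hH.dotProduct_mulVec_pos (x := (WithLp.equiv 2 (Fin p → ℝ)) x) hx'
    simpa [hTapp, PiLp.inner_apply, Matrix.toEuclideanLin_apply, dotProduct,
      mul_comm] using this
  have hcont : Continuous fun x : EuclideanSpace ℝ (Fin p) => ⟪x, T x⟫ :=
    continuous_id.inner T.continuous
  have hsne : (Metric.sphere (0 : EuclideanSpace ℝ (Fin p)) 1).Nonempty :=
    NormedSpace.sphere_nonempty.mpr zero_le_one
  obtain ⟨x₀, hx₀, hmin⟩ := (isCompact_sphere (0 : EuclideanSpace ℝ (Fin p)) 1).exists_isMinOn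
    hsne hcont.continuousOn
  have hx₀n : ‖x₀‖ = 1 := by simpa using hx₀
  refine ⟨⟪x₀, T x₀⟫, hpos x₀ (by intro h; rw [h] at hx₀n; simp at hx₀n), ?_⟩
  intro x
  rcases eq_or_ne x 0 with rfl | hx
  · simp
  · have hxn : (0:ℝ) < ‖x‖ := norm_pos_iff.mpr hx
    set u : EuclideanSpace ℝ (Fin p) := ‖x‖⁻¹ • x with hu
    have hun : ‖u‖ = 1 := norm_smul_inv_norm hx
    have hmem : u ∈ Metric.sphere (0 : EuclideanSpace ℝ (Fin p)) 1 := by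
      simp [hun]
    have h1 : ⟪x₀, T x₀⟫ ≤ ⟪u, T u⟫ := hmin hmem
    have h2 : ⟪u, T u⟫ = ‖x‖⁻¹ ^ 2 * ⟪x, T x⟫ := by
      rw [hu, T.map_smul, real_inner_smul_left, real_inner_smul_right]
      ring
    have h3 : ⟪x, T x⟫ = ‖x‖ ^ 2 * ⟪u, T u⟫ := by
      rw [h2]; field_simp
    rw [hTapp] at h3 ⊢
    rw [h3]
    have := mul_le_mul_of_nonneg_left h1 (sq_nonneg ‖x‖)
    calc ⟪x₀, T x₀⟫ * ‖x‖^2 ≤ ‖x‖^2 * ⟪u, (Matrix.toEuclideanLin H) u⟫ := by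
          rw [mul_comm]; exact this
      _ = _ := rfl

lemma pjMatrix_one_norm_le {p : ℕ} : ‖(1 : Matrix (Fin p) (Fin p) ℝ)‖ ≤ 1 := by
  rw [Matrix.l2_opNorm_def]
  apply ContinuousLinearMap.opNorm_le_bound _ zero_le_one
  intro x
  have : (Matrix.toEuclideanLin (1 : Matrix (Fin p) (Fin p) ℝ)) x = x := by
    simp [Matrix.toEuclideanLin_apply]
  simp only [LinearEquiv.trans_apply]
  erw [this]
  simp

lemma pjContraction_bound {p : ℕ} (H : Matrix (Fin p) (Fin p) ℝ) (μ g : ℝ)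
    (hμ : 0 < μ)
    (hquad : ∀ x : EuclideanSpace ℝ (Fin p), μ * ‖x‖ ^ 2 ≤ ⟪x, (Matrix.toEuclideanLin H) x⟫)
    (hg : 0 ≤ g) (hgc : g * ‖H‖ ^ 2 ≤ μ) (hgμ : μ * g ≤ 1) :
    ‖(1 : Matrix (Fin p) (Fin p) ℝ) - g • H‖ ≤ 1 - μ/2 * g := by
  rw [Matrix.l2_opNorm_def]
  have hc : (0:ℝ) ≤ ‖H‖ := norm_nonneg _
  apply ContinuousLinearMap.opNorm_le_bound _ (by nlinarith)
  intro x
  have happ : (Matrix.toEuclideanLin ((1 : Matrix (Fin p) (Fin p) ℝ) - g • H)) x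
      = x - g • (Matrix.toEuclideanLin H) x := by
    rw [map_sub, _root_.map_smul]
    congr 1
    simp [Matrix.toEuclideanLin_apply]
  simp only [LinearEquiv.trans_apply]
  erw [happ]
  set y := (Matrix.toEuclideanLin H) x with hy
  have hyn : ‖y‖ ≤ ‖H‖ * ‖x‖ :=
    ContinuousLinearMap.le_opNorm (LinearMap.toContinuousLinearMap (Matrix.toEuclideanLin H)) x
  have hinner : μ * ‖x‖ ^ 2 ≤ ⟪x, y⟫ := hquad x
  have hsq : ‖x - g • y‖ ^ 2 ≤ ((1 - μ/2 * g) * ‖x‖) ^ 2 := by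
    rw [norm_sub_sq_real, real_inner_smul_right, norm_smul, Real.norm_eq_abs,
      abs_of_nonneg hg]
    have h1 : (g * ‖y‖) ^ 2 ≤ g * μ * ‖x‖^2 := by
      have h2 : ‖y‖^2 ≤ (‖H‖ * ‖x‖)^2 :=
        pow_le_pow_left₀ (norm_nonneg _) hyn 2
      nlinarith [mul_le_mul_of_nonneg_left h2 (sq_nonneg g),
        mul_le_mul_of_nonneg_right hgc (mul_nonneg hg (sq_nonneg ‖x‖))]
    nlinarith [norm_nonneg x, sq_nonneg (μ * g * ‖x‖), sq_nonneg ‖x‖]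
  have h0 : (0:ℝ) ≤ (1 - μ/2 * g) * ‖x‖ := by nlinarith [norm_nonneg x]
  calc ‖x - g • y‖ = Real.sqrt (‖x - g • y‖^2) := by
        rw [Real.sqrt_sq (norm_nonneg _)]
    _ ≤ Real.sqrt (((1 - μ/2 * g) * ‖x‖)^2) := Real.sqrt_le_sqrt hsq
    _ = (1 - μ/2 * g) * ‖x‖ := Real.sqrt_sq h0

lemma pjList_prod_norm_le {p : ℕ} (γ : ℕ → ℝ) (H : Matrix (Fin p) (Fin p) ℝ) (β : ℕ → ℝ)
    (hβnn : ∀ l, 0 ≤ β l) :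
    ∀ (k s : ℕ), (∀ l, s ≤ l → ‖(1:Matrix (Fin p) (Fin p) ℝ) - γ l • H‖ ≤ β l) →
      ‖((List.range' s k).map fun l => (1:Matrix (Fin p) (Fin p) ℝ) - γ l • H).prod‖
        ≤ ∏ l ∈ Finset.Ico s (s+k), β l := by
  intro k
  induction k with
  | zero =>
    intro s _
    simp only [List.range', List.map_nil, List.prod_nil, Nat.add_zero, Finset.Ico_self,
      Finset.prod_empty]
    exact pjMatrix_one_norm_le
  | succ k ih =>
    intro s hs
    rw [List.range'_succ, List.map_cons, List.prod_cons]
    have h1 : ‖(1:Matrix (Fin p) (Fin p) ℝ) - γ s • H‖ ≤ β s := hs s le_rfl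
    have h2 := ih (s+1) (fun l hl => hs l (by omega))
    have h3 : s + 1 + k = s + (k+1) := by omega
    rw [h3] at h2
    rw [Finset.prod_eq_prod_Ico_succ_bot (by omega : s < s + (k+1))]
    calc ‖((1:Matrix (Fin p) (Fin p) ℝ) - γ s • H) *
          ((List.range' (s+1) k).map fun l => (1:Matrix (Fin p) (Fin p) ℝ) - γ l • H).prod‖
        ≤ ‖(1:Matrix (Fin p) (Fin p) ℝ) - γ s • H‖ *
          ‖((List.range' (s+1) k).map fun l => (1:Matrix (Fin p) (Fin p) ℝ) - γ l • H).prod‖ :=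
          norm_mul_le _ _
      _ ≤ β s * ∏ l ∈ Finset.Ico (s+1) (s+(k+1)), β l :=
          mul_le_mul h1 h2 (norm_nonneg _) (hβnn s)

lemma pjThreshold_exists (γ₁ α μ μ' c : ℝ) (hγ₁ : 0 < γ₁) (hα : 0 < α) (hα1 : α < 1)
    (hμ : 0 < μ) (hμ' : μ' = μ/2) (γ : ℕ → ℝ) (hγ : ∀ i : ℕ, γ i = γ₁ * (i : ℝ) ^ (-α)) :
    ∃ N : ℕ, 1 ≤ N ∧ (∀ l : ℕ, N ≤ l → γ l * c^2 ≤ μ ∧ μ * γ l ≤ 1) ∧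
      (∀ j : ℕ, N ≤ j → 4 ≤ μ' * γ₁ * (j:ℝ)^(1-α)) := by
  have hμ'0 : 0 < μ' := by rw [hμ']; positivity
  have t1 : Tendsto (fun l : ℕ => γ₁ * (l:ℝ)^(-α)) atTop (nhds 0) := by
    have h := (tendsto_rpow_neg_atTop hα).comp tendsto_natCast_atTop_atTop
    simpa using h.const_mul γ₁
  have t2 : Tendsto (fun j : ℕ => μ' * γ₁ * (j:ℝ)^(1-α)) atTop atTop := by
    have h := (tendsto_rpow_atTop (by linarith : 0 < 1-α)).comp tendsto_natCast_atTop_atTop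
    exact h.const_mul_atTop (by positivity)
  have e1 : ∀ᶠ l : ℕ in atTop, γ₁ * (l:ℝ)^(-α) * c^2 ≤ μ := by
    rcases eq_or_ne c 0 with rfl | hc
    · filter_upwards with l
      have : (0:ℝ) ≤ γ₁ * (l:ℝ)^(-α) := by positivity
      nlinarith
    · have hc2 : (0:ℝ) < c^2 := by positivity
      have := t1.eventually_le_const (show (0:ℝ) < μ/c^2 by positivity)
      filter_upwards [this] with l hl
      calc γ₁ * (l:ℝ)^(-α) * c^2 ≤ (μ/c^2) * c^2 := by nlinarith
        _ = μ := by field_simp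
  have e2 : ∀ᶠ l : ℕ in atTop, μ * (γ₁ * (l:ℝ)^(-α)) ≤ 1 := by
    have := t1.eventually_le_const (show (0:ℝ) < 1/μ by positivity)
    filter_upwards [this] with l hl
    calc μ * (γ₁ * (l:ℝ)^(-α)) ≤ μ * (1/μ) := by
          have : (0:ℝ) ≤ γ₁ * (l:ℝ)^(-α) := by positivity
          nlinarith
      _ = 1 := by field_simp
  have e3 : ∀ᶠ j : ℕ in atTop, 4 ≤ μ' * γ₁ * (j:ℝ)^(1-α) := t2.eventually_ge_atTop 4
  obtain ⟨N, hN⟩ := eventually_atTop.mp ((e1.and e2).and e3)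
  refine ⟨max N 1, le_max_right _ _, ?_, ?_⟩
  · intro l hl
    have := hN l (le_trans (le_max_left _ _) hl)
    rw [hγ]
    exact ⟨this.1.1, this.1.2⟩
  · intro j hj
    exact (hN j (le_trans (le_max_left _ _) hj)).2

/-- The operator (`ℓ²→ℓ²`) norm of a real matrix. -/
noncomputable def matOpNorm {p : ℕ} (A : Matrix (Fin p) (Fin p) ℝ) : ℝ :=
  ‖LinearMap.toContinuousLinearMap (Matrix.toEuclideanLin A)‖

/-- uniform boundedness of `B_j^n = A_j^n − H₀⁻¹`
(Lemma 1 of Polyak–Juditsky, first part). -/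
theorem stmt4 (p : ℕ) (hp : 1 ≤ p)
    (H₀ : Matrix (Fin p) (Fin p) ℝ) (hH₀symm : H₀.IsSymm) (hH₀ : H₀.PosDef)
    (γ₁ α : ℝ) (hγ₁ : 0 < γ₁) (hα : 1 / 2 < α ∧ α < 1)
    (γ : ℕ → ℝ) (hγ : ∀ i : ℕ, γ i = γ₁ * (i : ℝ) ^ (-α))
    (A B : ℕ → ℕ → Matrix (Fin p) (Fin p) ℝ)
    (hA : ∀ j n, A j n = γ j • ∑ i ∈ Finset.Icc j n,
      (((List.range' (j + 1) (i - j)).map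
        fun l => (1 : Matrix (Fin p) (Fin p) ℝ) - γ l • H₀).prod))
    (hB : ∀ j n, B j n = A j n - H₀⁻¹) :
    ∃ M : ℝ, 0 < M ∧ ∀ j n : ℕ, 1 ≤ j → j ≤ n → matOpNorm (B j n) ≤ M := by
  obtain ⟨hα2, hα1⟩ := hα
  have hαpos : 0 < α := by linarith
  obtain ⟨μ, hμpos, hquad⟩ := pjPosdef_inner_bound hp H₀ hH₀
  set c : ℝ := ‖H₀‖ with hc
  have hc0 : 0 ≤ c := norm_nonneg _
  set μ' : ℝ := μ/2 with hμ'
  have hμ'0 : 0 < μ' := by rw [hμ']; positivity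
  set K : ℝ := 1 + γ₁ * c with hK
  have hK1 : 1 ≤ K := by rw [hK]; nlinarith
  obtain ⟨N, hN1, hNl, hNj⟩ := pjThreshold_exists γ₁ α μ μ' c hγ₁ hαpos hα1 hμpos hμ' γ hγ
  set β : ℕ → ℝ := fun l => if l < N then K else 1 - μ' * γ l with hβdef
  have hγnn : ∀ l : ℕ, 0 ≤ γ l := by
    intro l
    rw [hγ]
    positivity
  have hβnn : ∀ l, 0 ≤ β l := by
    intro l
    simp only [hβdef]
    by_cases h : l < N
    · rw [if_pos h]; linarith
    · rw [if_neg h]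
      have h2 := (hNl l (by omega)).2
      have := hγnn l
      rw [hμ']
      nlinarith
  have hβK : ∀ l, β l ≤ K := by
    intro l
    simp only [hβdef]
    by_cases h : l < N
    · rw [if_pos h]
    · rw [if_neg h]
      have := hγnn l
      nlinarith
  have hβeq : ∀ l, N < l → β l = 1 - μ' * γ l := by
    intro l hl
    simp only [hβdef]
    rw [if_neg (by omega : ¬ l < N)]
  have hβmat : ∀ l, 1 ≤ l → ‖(1:Matrix (Fin p) (Fin p) ℝ) - γ l • H₀‖ ≤ β l := by
    intro l hl
    simp only [hβdef]
    by_cases h : l < N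
    · rw [if_pos h]
      have hle : γ l ≤ γ₁ := pjGamma_le γ₁ α γ hγ₁ hαpos hγ hl
      calc ‖(1:Matrix (Fin p) (Fin p) ℝ) - γ l • H₀‖
          ≤ ‖(1:Matrix (Fin p) (Fin p) ℝ)‖ + ‖γ l • H₀‖ := norm_sub_le _ _
        _ ≤ 1 + γ l * c := by
            have := pjMatrix_one_norm_le (p := p)
            rw [norm_smul, Real.norm_eq_abs, abs_of_nonneg (hγnn l)]
            linarith
        _ ≤ K := by rw [hK]; nlinarith
    · rw [if_neg h]
      have h1 := (hNl l (by omega)).1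
      have h2 := (hNl l (by omega)).2
      have := pjContraction_bound H₀ μ (γ l) hμpos hquad (hγnn l) h1 h2
      rw [hμ']
      calc ‖(1:Matrix (Fin p) (Fin p) ℝ) - γ l • H₀‖ ≤ 1 - μ/2 * γ l := this
        _ = 1 - μ/2 * γ l := rfl
  have hcond : ∀ j : ℕ, N ≤ j → 2 ≤ μ' * (j:ℝ) * γ (j+1) := by
    intro j hj
    have hj1 : 1 ≤ j := le_trans hN1 hj
    have h4 := hNj j hj
    have hid := pjGamma_id γ₁ α γ hγ₁ hγ hj1
    have h2γ := pjGamma_two γ₁ α γ hγ₁ hαpos (le_of_lt hα1) hγ hj1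
    have hj0 : (0:ℝ) < (j:ℝ) := by exact_mod_cast hj1
    have h5 : 4 ≤ μ' * ((j:ℝ) * γ j) := by
      have e : μ' * ((j:ℝ) * γ j) = μ' * γ₁ * (j:ℝ)^(1-α) := by rw [hid]; ring
      linarith
    have h6 := mul_le_mul_of_nonneg_left h2γ (mul_nonneg hμ'0.le hj0.le)
    nlinarith [h5, h6]
  -- norm bound on A j n
  have hAnorm : ∀ j n : ℕ, 1 ≤ j → j ≤ n →
      ‖A j n‖ ≤ γ j * ∑ i ∈ Finset.Icc j n, ∏ l ∈ Finset.Icc (j+1) i, β l := by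
    intro j n hj hjn
    rw [hA j n, norm_smul, Real.norm_eq_abs, abs_of_nonneg (hγnn j)]
    apply mul_le_mul_of_nonneg_left _ (hγnn j)
    calc ‖∑ i ∈ Finset.Icc j n, (((List.range' (j + 1) (i - j)).map
            fun l => (1 : Matrix (Fin p) (Fin p) ℝ) - γ l • H₀).prod)‖
        ≤ ∑ i ∈ Finset.Icc j n, ‖(((List.range' (j + 1) (i - j)).map
            fun l => (1 : Matrix (Fin p) (Fin p) ℝ) - γ l • H₀).prod)‖ :=
          norm_sum_le _ _
      _ ≤ ∑ i ∈ Finset.Icc j n, ∏ l ∈ Finset.Icc (j+1) i, β l := by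
          apply Finset.sum_le_sum
          intro i hi
          have hji : j ≤ i := (Finset.mem_Icc.mp hi).1
          have := pjList_prod_norm_le γ H₀ β hβnn (i-j) (j+1)
            (fun l hl => hβmat l (by omega))
          rwa [show j+1+(i-j) = i+1 by omega, Finset.Ico_add_one_right_eq_Icc] at this
  -- main scalar bound
  have hscalar : ∀ j n : ℕ, 1 ≤ j → j ≤ n →
      γ j * (∑ i ∈ Finset.Icc j n, ∏ l ∈ Finset.Icc (j+1) i, β l)
        ≤ (1+2*K)^N * (γ₁ + 4/μ') :=
    fun j n hj hjn => pjMaster γ₁ α γ μ' K β N hN1 hγ₁ hαpos (le_of_lt hα1) hμ'0 hK1 hγ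
      hβeq hβnn hβK hcond N j n hj hjn (by omega)
  -- assemble
  have hpow : (0:ℝ) < (1+2*K)^N := pow_pos (by linarith) N
  have hCpos : (0:ℝ) < γ₁ + 4/μ' := by positivity
  refine ⟨(1+2*K)^N * (γ₁ + 4/μ') + ‖H₀⁻¹‖ + 1, ?_, ?_⟩
  · have := norm_nonneg H₀⁻¹
    nlinarith
  · intro j n hj hjn
    have h1 : matOpNorm (B j n) = ‖B j n‖ := rfl
    rw [h1, hB j n]
    calc ‖A j n - H₀⁻¹‖ ≤ ‖A j n‖ + ‖H₀⁻¹‖ := norm_sub_le _ _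
      _ ≤ (1+2*K)^N * (γ₁ + 4/μ') + ‖H₀⁻¹‖ + 1 := by
          have := le_trans (hAnorm j n hj hjn) (hscalar j n hj hjn)
          linarith
end

section
/- Let p ≥ 1 and let H₀ be a symmetric positive definite real p×p matrix. Let γ_i = γ₁ i^{−α} with γ₁ > 0 and α ∈ (0.5, 1). For integers 1 ≤ j ≤ n define A_j^n = γ_j ∑_{i=j}^n ∏_{l=j+1}^i (I − γ_l H₀) (with the empty product ∏_{l=j+1}^j (I − γ_l H₀) = I) and B_j^n = A_j^n − H₀⁻¹. Then (1/n) ∑_{j=1}^n B_j^n → 0 (the zero matrix) as n → ∞. -/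
open Filter Matrix

open Finset
open scoped Matrix.Norms.L2Operator RealInnerProductSpace

section PJaux

variable {p : ℕ}

lemma PJ.matOpNorm_eq (A : Matrix (Fin p) (Fin p) ℝ) : matOpNorm A = ‖A‖ := rfl

/-- `PJ.PP H₀ γ j m = ∏_{l=j+1}^{m} (I - γ_l H₀)`. -/
noncomputable def PJ.PP (H₀ : Matrix (Fin p) (Fin p) ℝ) (γ : ℕ → ℝ) (j m : ℕ) :
    Matrix (Fin p) (Fin p) ℝ :=
  ((List.range' (j + 1) (m - j)).map fun l => (1 : Matrix (Fin p) (Fin p) ℝ) - γ l • H₀).prod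

/-- `PJ.QQ H₀ γ m = ∏_{l=1}^{m} (I - γ_l H₀)`. -/
noncomputable def PJ.QQ (H₀ : Matrix (Fin p) (Fin p) ℝ) (γ : ℕ → ℝ) (m : ℕ) :
    Matrix (Fin p) (Fin p) ℝ :=
  ((List.range' 1 m).map fun l => (1 : Matrix (Fin p) (Fin p) ℝ) - γ l • H₀).prod

namespace PJ

variable (H₀ : Matrix (Fin p) (Fin p) ℝ) (γ : ℕ → ℝ)

lemma PP_succ {j n : ℕ} (hj : j ≤ n) :
    PP H₀ γ j (n + 1) = PP H₀ γ j n * (1 - γ (n + 1) • H₀) := by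
  unfold PP
  have h1 : n + 1 - j = (n - j) + 1 := by omega
  rw [h1, List.range'_1_concat, List.map_append, List.prod_append]
  have h2 : j + 1 + (n - j) = n + 1 := by omega
  simp [h2]

lemma QQ_succ (n : ℕ) : QQ H₀ γ (n + 1) = QQ H₀ γ n * (1 - γ (n + 1) • H₀) := by
  unfold QQ
  rw [List.range'_1_concat, List.map_append, List.prod_append]
  simp [Nat.add_comm 1 n]

lemma key_T (n : ℕ) :
    H₀ * (∑ j ∈ Icc 1 n, γ j • PP H₀ γ j n) = 1 - QQ H₀ γ n := by
  induction n with
  | zero => simp [QQ]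
  | succ n ih =>
    rw [Finset.sum_Icc_succ_top (by omega)]
    have hterm : ∀ j ∈ Icc 1 n, γ j • PP H₀ γ j (n+1)
        = (γ j • PP H₀ γ j n) * (1 - γ (n+1) • H₀) := by
      intro j hj
      rw [PP_succ H₀ γ (mem_Icc.mp hj).2, smul_mul_assoc]
    rw [Finset.sum_congr rfl hterm, ← Finset.sum_mul]
    have hP : PP H₀ γ (n+1) (n+1) = 1 := by simp [PP]
    rw [hP, QQ_succ, mul_add, ← mul_assoc, ih, mul_smul_comm, mul_one, one_sub_mul]
    abel

lemma key_sum (hd : IsUnit H₀.det) (n : ℕ) :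
    ∑ j ∈ Icc 1 n, (γ j • ∑ i ∈ Icc j n, PP H₀ γ j i - H₀⁻¹)
      = -(H₀⁻¹ * ∑ i ∈ Icc 1 n, QQ H₀ γ i) := by
  have hswap : ∑ j ∈ Icc 1 n, γ j • ∑ i ∈ Icc j n, PP H₀ γ j i
      = ∑ i ∈ Icc 1 n, ∑ j ∈ Icc 1 i, γ j • PP H₀ γ j i := by
    simp_rw [Finset.smul_sum]
    exact Finset.sum_comm' (by intro x y; simp only [mem_Icc]; omega)
  have hmul : H₀ * ∑ j ∈ Icc 1 n, (γ j • ∑ i ∈ Icc j n, PP H₀ γ j i - H₀⁻¹)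
      = -∑ i ∈ Icc 1 n, QQ H₀ γ i := by
    rw [Finset.sum_sub_distrib, hswap, Finset.sum_const, Nat.card_Icc]
    rw [mul_sub, Finset.mul_sum]
    have : ∀ i ∈ Icc 1 n, H₀ * ∑ j ∈ Icc 1 i, γ j • PP H₀ γ j i = 1 - QQ H₀ γ i :=
      fun i _ => key_T H₀ γ i
    rw [Finset.sum_congr rfl this, Finset.sum_sub_distrib, Finset.sum_const, Nat.card_Icc,
      mul_smul_comm, Matrix.mul_nonsing_inv H₀ hd]
    abel
  calc ∑ j ∈ Icc 1 n, (γ j • ∑ i ∈ Icc j n, PP H₀ γ j i - H₀⁻¹)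
      = H₀⁻¹ * (H₀ * ∑ j ∈ Icc 1 n, (γ j • ∑ i ∈ Icc j n, PP H₀ γ j i - H₀⁻¹)) := by
        rw [← mul_assoc, Matrix.nonsing_inv_mul H₀ hd, one_mul]
    _ = -(H₀⁻¹ * ∑ i ∈ Icc 1 n, QQ H₀ γ i) := by rw [hmul, mul_neg]

lemma inner_toECLM (x : EuclideanSpace ℝ (Fin p)) :
    ⟪toEuclideanCLM (𝕜 := ℝ) H₀ x, x⟫
      = dotProduct (star (WithLp.equiv 2 _ x)) (H₀ *ᵥ (WithLp.equiv 2 _ x)) := by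
  rw [EuclideanSpace.inner_eq_star_dotProduct]
  rfl

lemma exists_mu (hp : 1 ≤ p) {H₀ : Matrix (Fin p) (Fin p) ℝ} (hH₀ : H₀.PosDef) :
    ∃ μ : ℝ, 0 < μ ∧ μ ≤ ‖H₀‖ ∧
      ∀ x : EuclideanSpace ℝ (Fin p), μ * ‖x‖ ^ 2 ≤ ⟪toEuclideanCLM (𝕜 := ℝ) H₀ x, x⟫ := by
  haveI : Nonempty (Fin p) := ⟨⟨0, hp⟩⟩
  haveI : Nontrivial (EuclideanSpace ℝ (Fin p)) := inferInstance
  set f := toEuclideanCLM (𝕜 := ℝ) H₀ with hf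
  have hgcont : Continuous fun x : EuclideanSpace ℝ (Fin p) => ⟪f x, x⟫ :=
    Continuous.inner f.continuous continuous_id
  have hsph : (Metric.sphere (0 : EuclideanSpace ℝ (Fin p)) 1).Nonempty :=
    NormedSpace.sphere_nonempty.2 zero_le_one
  obtain ⟨x₀, hx₀s, hmin⟩ := (isCompact_sphere (0 : EuclideanSpace ℝ (Fin p)) 1).exists_isMinOn
    hsph hgcont.continuousOn
  have hx₀norm : ‖x₀‖ = 1 := by simpa using hx₀s
  have hx₀ne : x₀ ≠ 0 := by intro h; rw [h] at hx₀norm; simp at hx₀norm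
  have hpos : ∀ x : EuclideanSpace ℝ (Fin p), x ≠ 0 → 0 < ⟪f x, x⟫ := by
    intro x hx
    rw [hf, inner_toECLM]
    exact hH₀.dotProduct_mulVec_pos (fun h => hx (by ext i; exact congrFun h i))
  refine ⟨⟪f x₀, x₀⟫, hpos x₀ hx₀ne, ?_, ?_⟩
  · calc ⟪f x₀, x₀⟫ ≤ ‖f x₀‖ * ‖x₀‖ := real_inner_le_norm _ _
      _ ≤ ‖f‖ * ‖x₀‖ * ‖x₀‖ := by
          have := f.le_opNorm x₀
          nlinarith [norm_nonneg x₀, norm_nonneg (f x₀)]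
      _ = ‖H₀‖ := by rw [hx₀norm]; simp [Matrix.cstar_norm_def, hf]
  · intro x
    rcases eq_or_ne x 0 with rfl | hx
    · simp
    · have hxn : (0:ℝ) < ‖x‖ := norm_pos_iff.2 hx
      have hy : (‖x‖⁻¹ • x) ∈ Metric.sphere (0 : EuclideanSpace ℝ (Fin p)) 1 := by
        simp [norm_smul, abs_of_pos (inv_pos.2 hxn), inv_mul_cancel₀ hxn.ne']
      have hle : ⟪f x₀, x₀⟫ ≤ ⟪f (‖x‖⁻¹ • x), (‖x‖⁻¹ • x)⟫ := hmin hy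
      have hval : ⟪f (‖x‖⁻¹ • x), (‖x‖⁻¹ • x)⟫ = ‖x‖⁻¹ * (‖x‖⁻¹ * ⟪f x, x⟫) := by
        rw [ContinuousLinearMap.map_smul, real_inner_smul_left, real_inner_smul_right]
      rw [hval] at hle
      have h3 : ⟪f x₀, x₀⟫ * ‖x‖ ^ 2 ≤ (‖x‖⁻¹ * (‖x‖⁻¹ * ⟪f x, x⟫)) * ‖x‖ ^ 2 :=
        mul_le_mul_of_nonneg_right hle (by positivity)
      have h4 : (‖x‖⁻¹ * (‖x‖⁻¹ * ⟪f x, x⟫)) * ‖x‖ ^ 2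
          = ⟪f x, x⟫ * (‖x‖⁻¹ * ‖x‖) * (‖x‖⁻¹ * ‖x‖) := by ring
      rw [inv_mul_cancel₀ hxn.ne', mul_one, mul_one] at h4
      linarith

lemma factor_bound {H₀ : Matrix (Fin p) (Fin p) ℝ} {μ t : ℝ} (hμ : 0 < μ) (hμH : μ ≤ ‖H₀‖)
    (hquad : ∀ x : EuclideanSpace ℝ (Fin p), μ * ‖x‖ ^ 2 ≤ ⟪toEuclideanCLM (𝕜 := ℝ) H₀ x, x⟫)
    (ht : 0 ≤ t) (htH : t * ‖H₀‖ ^ 2 ≤ μ) :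
    ‖(1 : Matrix (Fin p) (Fin p) ℝ) - t • H₀‖ ≤ Real.exp (-(μ / 2 * t)) := by
  set f := toEuclideanCLM (𝕜 := ℝ) H₀ with hfdef
  set T := toEuclideanCLM (𝕜 := ℝ) ((1 : Matrix (Fin p) (Fin p) ℝ) - t • H₀) with hTdef
  have hT : ∀ x, T x = x - t • f x := by
    intro x
    rw [hTdef, map_sub, _root_.map_smul, _root_.map_one]
    rfl
  have hH₀pos : (0:ℝ) < ‖H₀‖ := lt_of_lt_of_le hμ hμH
  have htμ : t * μ ≤ 1 := by
    nlinarith [mul_le_mul_of_nonneg_left (mul_self_le_mul_self hμ.le hμH) ht]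
  have h1tμ : 0 ≤ 1 - t * μ := by linarith
  have hnormf : ‖f‖ = ‖H₀‖ := (Matrix.cstar_norm_def H₀).symm
  have hpt : ∀ x, ‖T x‖ ≤ Real.sqrt (1 - t * μ) * ‖x‖ := by
    intro x
    have h3 : ‖f x‖ ≤ ‖H₀‖ * ‖x‖ := by rw [← hnormf]; exact f.le_opNorm x
    have h3sq : ‖f x‖ ^ 2 ≤ ‖H₀‖ ^ 2 * ‖x‖ ^ 2 := by
      nlinarith [norm_nonneg (f x), norm_nonneg x]
    have hsq : ‖T x‖ ^ 2 ≤ (1 - t * μ) * ‖x‖ ^ 2 := by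
      rw [hT, norm_sub_sq_real]
      have h1 : ⟪x, t • f x⟫ = t * ⟪f x, x⟫ := by
        rw [real_inner_smul_right, real_inner_comm]
      have h2 : ‖t • f x‖ ^ 2 = t ^ 2 * ‖f x‖ ^ 2 := by
        rw [norm_smul, mul_pow, Real.norm_eq_abs, sq_abs]
      rw [h1, h2]
      nlinarith [hquad x, mul_le_mul_of_nonneg_left h3sq (mul_nonneg ht ht),
        mul_le_mul_of_nonneg_right htH (mul_nonneg ht (sq_nonneg ‖x‖)),
        mul_le_mul_of_nonneg_left (hquad x) (mul_nonneg (by norm_num : (0:ℝ) ≤ 2) ht)]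
    calc ‖T x‖ = Real.sqrt (‖T x‖ ^ 2) := (Real.sqrt_sq (norm_nonneg _)).symm
      _ ≤ Real.sqrt ((1 - t * μ) * ‖x‖ ^ 2) := Real.sqrt_le_sqrt hsq
      _ = Real.sqrt (1 - t * μ) * ‖x‖ := by
          rw [Real.sqrt_mul h1tμ, Real.sqrt_sq (norm_nonneg _)]
  have hop : ‖(1 : Matrix (Fin p) (Fin p) ℝ) - t • H₀‖ ≤ Real.sqrt (1 - t * μ) := by
    rw [Matrix.cstar_norm_def]
    exact ContinuousLinearMap.opNorm_le_bound _ (Real.sqrt_nonneg _) hpt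
  refine le_trans hop ?_
  have hle : 1 - t * μ ≤ Real.exp (-(t * μ)) := by
    have := Real.add_one_le_exp (-(t * μ)); linarith
  calc Real.sqrt (1 - t * μ) ≤ Real.sqrt (Real.exp (-(t * μ))) := Real.sqrt_le_sqrt hle
    _ = Real.exp (-(t * μ) / 2) := (Real.exp_half _).symm
    _ = Real.exp (-(μ / 2 * t)) := by ring_nf

end PJ

end PJaux

/-- Cesàro convergence `(1/n) ∑_{j=1}^n B_j^n → 0`
(Lemma 1 of Polyak–Juditsky, second part), stated as convergence to the zero
matrix in operator norm. -/
theorem stmt5 (p : ℕ) (hp : 1 ≤ p)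
    (H₀ : Matrix (Fin p) (Fin p) ℝ) (hH₀symm : H₀.IsSymm) (hH₀ : H₀.PosDef)
    (γ₁ α : ℝ) (hγ₁ : 0 < γ₁) (hα : 1 / 2 < α ∧ α < 1)
    (γ : ℕ → ℝ) (hγ : ∀ i : ℕ, γ i = γ₁ * (i : ℝ) ^ (-α))
    (A B : ℕ → ℕ → Matrix (Fin p) (Fin p) ℝ)
    (hA : ∀ j n, A j n = γ j • ∑ i ∈ Finset.Icc j n,
      (((List.range' (j + 1) (i - j)).map
        fun l => (1 : Matrix (Fin p) (Fin p) ℝ) - γ l • H₀).prod))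
    (hB : ∀ j n, B j n = A j n - H₀⁻¹) :
    Tendsto (fun n : ℕ => matOpNorm (((n : ℝ))⁻¹ • ∑ j ∈ Finset.Icc 1 n, B j n))
      atTop (nhds 0) := by
  classical
  -- the key algebraic identity
  have hd : IsUnit H₀.det := (Matrix.PosDef.det_pos hH₀).ne'.isUnit
  have hkey : ∀ n, ∑ j ∈ Icc 1 n, B j n = -(H₀⁻¹ * ∑ i ∈ Icc 1 n, PJ.QQ H₀ γ i) := by
    intro n
    have : ∀ j, B j n = γ j • ∑ i ∈ Icc j n, PJ.PP H₀ γ j i - H₀⁻¹ := by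
      intro j; rw [hB, hA]; rfl
    simp_rw [this]
    exact PJ.key_sum H₀ γ hd n
  have hγnn : ∀ l, 0 ≤ γ l := fun l => by rw [hγ]; positivity
  -- the coercivity constant μ
  obtain ⟨μ, hμpos, hμle, hquad⟩ := PJ.exists_mu hp hH₀
  have hH₀pos : (0:ℝ) < ‖H₀‖ := lt_of_lt_of_le hμpos hμle
  -- γ tends to 0, so eventually γ l * ‖H₀‖² ≤ μ
  have hγ0 : Tendsto γ atTop (nhds 0) := by
    have h1 : Tendsto (fun l : ℕ => (l : ℝ) ^ (-α)) atTop (nhds 0) :=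
      (tendsto_rpow_neg_atTop (by linarith [hα.1] : 0 < α)).comp tendsto_natCast_atTop_atTop
    have := h1.const_mul γ₁
    rw [mul_zero] at this
    exact Tendsto.congr (fun l => (hγ l).symm) this
  obtain ⟨N, hN⟩ : ∃ N : ℕ, ∀ l ≥ N, γ l * ‖H₀‖ ^ 2 ≤ μ := by
    have : ∀ᶠ l : ℕ in atTop, γ l < μ / ‖H₀‖ ^ 2 := by
      refine hγ0.eventually_lt_const ?_
      positivity
    obtain ⟨N, hN⟩ := eventually_atTop.mp this
    refine ⟨N, fun l hl => ?_⟩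
    have := (hN l hl).le
    calc γ l * ‖H₀‖ ^ 2 ≤ (μ / ‖H₀‖ ^ 2) * ‖H₀‖ ^ 2 := by
          exact mul_le_mul_of_nonneg_right this (by positivity)
      _ = μ := by field_simp
  have hfac : ∀ l ≥ N, ‖(1 : Matrix (Fin p) (Fin p) ℝ) - γ l • H₀‖
      ≤ Real.exp (-(μ / 2 * γ l)) :=
    fun l hl => PJ.factor_bound hμpos hμle hquad (hγnn l) (hN l hl)
  -- decay bound for Q
  set c : ℝ := μ / 2 with hc
  have hcpos : 0 < c := by positivity
  set C : ℝ := ‖PJ.QQ H₀ γ N‖ with hC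
  have hQbound : ∀ m : ℕ, ‖PJ.QQ H₀ γ (N + m)‖
      ≤ C * Real.exp (-(c * ∑ l ∈ Icc (N + 1) (N + m), γ l)) := by
    intro m
    induction m with
    | zero => simp [hC]
    | succ m ih =>
      have hQs : PJ.QQ H₀ γ (N + (m + 1)) = PJ.QQ H₀ γ (N + m) * (1 - γ (N + m + 1) • H₀) := by
        have := PJ.QQ_succ H₀ γ (N + m)
        rw [← Nat.add_assoc] at *
        exact this
      rw [hQs]
      calc ‖PJ.QQ H₀ γ (N + m) * (1 - γ (N + m + 1) • H₀)‖
          ≤ ‖PJ.QQ H₀ γ (N + m)‖ * ‖(1 : Matrix (Fin p) (Fin p) ℝ) - γ (N + m + 1) • H₀‖ :=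
            norm_mul_le _ _
        _ ≤ (C * Real.exp (-(c * ∑ l ∈ Icc (N + 1) (N + m), γ l)))
              * Real.exp (-(c * γ (N + m + 1))) := by
            apply mul_le_mul ih (hfac _ (by omega)) (norm_nonneg _)
            have : (0:ℝ) ≤ Real.exp (-(c * ∑ l ∈ Icc (N + 1) (N + m), γ l)) :=
              (Real.exp_pos _).le
            nlinarith [norm_nonneg (PJ.QQ H₀ γ N)]
        _ = C * Real.exp (-(c * ∑ l ∈ Icc (N + 1) (N + (m + 1)), γ l)) := by
            rw [show N + (m + 1) = (N + m) + 1 by omega,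
              Finset.sum_Icc_succ_top (by omega : N + 1 ≤ N + m + 1), mul_assoc,
              ← Real.exp_add]
            ring_nf
  -- divergence of the partial sums of γ
  have hdivIcc : Tendsto (fun n => ∑ l ∈ Icc (N + 1) n, γ l) atTop atTop := by
    have hns : ¬ Summable γ := by
      intro hs
      have h2 : Summable (fun l : ℕ => (l : ℝ) ^ (-α)) := by
        have := hs.mul_left γ₁⁻¹
        refine this.congr fun l => ?_
        rw [hγ, ← mul_assoc, inv_mul_cancel₀ hγ₁.ne', one_mul]
      have := Real.summable_nat_rpow.mp h2
      linarith [hα.2]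
    have hdiv : Tendsto (fun n => ∑ l ∈ range n, γ l) atTop atTop :=
      (not_summable_iff_tendsto_nat_atTop_of_nonneg hγnn).mp hns
    have heq : ∀ n, n ≥ N → ∑ l ∈ Icc (N + 1) n, γ l
        = ∑ l ∈ range (n + 1), γ l - ∑ l ∈ range (N + 1), γ l := by
      intro n hn
      rw [← Finset.Ico_add_one_right_eq_Icc, Finset.sum_Ico_eq_sub _ (by omega)]
    have h1 : Tendsto (fun n => ∑ l ∈ range (n + 1), γ l - ∑ l ∈ range (N + 1), γ l)
        atTop atTop :=
      tendsto_atTop_add_const_right _ _ (hdiv.comp (tendsto_add_atTop_nat 1))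
    refine Tendsto.congr' ?_ h1
    filter_upwards [Ici_mem_atTop N] with n hn
    exact (heq n hn).symm
  -- norms of Q tend to 0
  have hQ0 : Tendsto (fun i => ‖PJ.QQ H₀ γ i‖) atTop (nhds 0) := by
    have hg0 : Tendsto (fun i => C * Real.exp (-(c * ∑ l ∈ Icc (N + 1) i, γ l)))
        atTop (nhds 0) := by
      have h1 : Tendsto (fun i => c * ∑ l ∈ Icc (N + 1) i, γ l) atTop atTop :=
        hdivIcc.const_mul_atTop hcpos
      have h2 : Tendsto (fun i => -(c * ∑ l ∈ Icc (N + 1) i, γ l)) atTop atBot :=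
        tendsto_neg_atTop_atBot.comp h1
      have h3 := Real.tendsto_exp_atBot.comp h2
      have := h3.const_mul C
      rw [mul_zero] at this
      exact this
    refine squeeze_zero' (Eventually.of_forall fun i => norm_nonneg _) ?_ hg0
    filter_upwards [Ici_mem_atTop N] with i hi
    have hNi : N ≤ i := hi
    have : i = N + (i - N) := by omega
    rw [this]
    exact hQbound (i - N)
  -- Cesàro averaging
  have hces : Tendsto (fun n : ℕ => (n : ℝ)⁻¹ * ∑ i ∈ Icc 1 n, ‖PJ.QQ H₀ γ i‖)
      atTop (nhds 0) := by
    have h1 : Tendsto (fun i : ℕ => ‖PJ.QQ H₀ γ (i + 1)‖) atTop (nhds 0) :=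
      hQ0.comp (tendsto_add_atTop_nat 1)
    have h2 := h1.cesaro
    refine h2.congr fun n => ?_
    congr 1
    rw [← Finset.Ico_add_one_right_eq_Icc, Finset.sum_Ico_eq_sum_range]
    exact Finset.sum_congr (by simp) fun i _ => by rw [Nat.add_comm 1 i]
  -- final squeeze
  have hbound : ∀ n : ℕ, matOpNorm (((n : ℝ))⁻¹ • ∑ j ∈ Icc 1 n, B j n)
      ≤ ‖H₀⁻¹‖ * ((n : ℝ)⁻¹ * ∑ i ∈ Icc 1 n, ‖PJ.QQ H₀ γ i‖) := by
    intro n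
    rw [PJ.matOpNorm_eq, hkey n, norm_smul, Real.norm_eq_abs, abs_of_nonneg (by positivity),
      norm_neg]
    have h1 : ‖H₀⁻¹ * ∑ i ∈ Icc 1 n, PJ.QQ H₀ γ i‖
        ≤ ‖H₀⁻¹‖ * ∑ i ∈ Icc 1 n, ‖PJ.QQ H₀ γ i‖ := by
      refine le_trans (norm_mul_le _ _) ?_
      exact mul_le_mul_of_nonneg_left (norm_sum_le _ _) (norm_nonneg _)
    calc (n : ℝ)⁻¹ * ‖H₀⁻¹ * ∑ i ∈ Icc 1 n, PJ.QQ H₀ γ i‖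
        ≤ (n : ℝ)⁻¹ * (‖H₀⁻¹‖ * ∑ i ∈ Icc 1 n, ‖PJ.QQ H₀ γ i‖) := by
          exact mul_le_mul_of_nonneg_left h1 (by positivity)
      _ = ‖H₀⁻¹‖ * ((n : ℝ)⁻¹ * ∑ i ∈ Icc 1 n, ‖PJ.QQ H₀ γ i‖) := by ring
  have hg : Tendsto (fun n : ℕ => ‖H₀⁻¹‖ * ((n : ℝ)⁻¹ * ∑ i ∈ Icc 1 n, ‖PJ.QQ H₀ γ i‖))
      atTop (nhds 0) := by
    have := hces.const_mul ‖H₀⁻¹‖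
    rw [mul_zero] at this
    exact this
  refine squeeze_zero (fun n => ?_) hbound hg
  rw [PJ.matOpNorm_eq]
  exact norm_nonneg _
end

section
/- Let (Ω, 𝓕, P) be a probability space with a filtration 𝓕₁ ⊆ 𝓕₂ ⊆ ⋯ ⊆ 𝓕. For each n ≥ 1 let V_n, W_n, a_n, b_n be non-negative, integrable, 𝓕_n-measurable random variables such that E(V_n | 𝓕_{n−1}) ≤ V_{n−1}(1 + a_{n−1}) + b_{n−1} − W_{n−1} almost surely for every n ≥ 2. Then, almost surely on the event {∑_{n=1}^∞ a_n < ∞ and ∑_{n=1}^∞ b_n < ∞}, the sequence V_n converges to a finite limit and ∑_{n=1}^∞ W_n < ∞. -/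
open MeasureTheory Filter
open scoped ENNReal NNReal

namespace RS

variable {Ω : Type*}

/-- `A a n ω = ∏_{k<n} (1 + a (k+1) ω)`. -/
noncomputable def A (a : ℕ → Ω → ℝ) (n : ℕ) (ω : Ω) : ℝ :=
  ∏ k ∈ Finset.range n, (1 + a (k + 1) ω)

/-- `B b n ω = ∑_{k<n} b (k+1) ω`. -/
noncomputable def B (b : ℕ → Ω → ℝ) (n : ℕ) (ω : Ω) : ℝ :=
  ∑ k ∈ Finset.range n, b (k + 1) ω

/-- The Robbins–Siegmund supermartingale. -/
noncomputable def U (V W a b : ℕ → Ω → ℝ) (n : ℕ) (ω : Ω) : ℝ :=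
  V (n + 1) ω / A a n ω +
    ∑ k ∈ Finset.range n, (W (k + 1) ω - b (k + 1) ω) / A a (k + 1) ω

/-- `U` stopped before the partial sums of `b` exceed `c`. -/
noncomputable def X (V W a b : ℕ → Ω → ℝ) (c : ℝ) : ℕ → Ω → ℝ
  | 0 => U V W a b 0
  | n + 1 => fun ω => X V W a b c n ω +
      ({ω' | B b (n + 1) ω' ≤ c}).indicator (fun _ => (1 : ℝ)) ω *
        (U V W a b (n + 1) ω - U V W a b n ω)

end RS

set_option maxHeartbeats 1000000 in
/-- the Robbins–Siegmund almost-supermartingale convergence theorem. -/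
theorem stmt6 {Ω : Type*} {m0 : MeasurableSpace Ω} (μ : Measure Ω)
    [IsProbabilityMeasure μ] (ℱ : Filtration ℕ m0)
    (V W a b : ℕ → Ω → ℝ)
    (hVmeas : ∀ n, 1 ≤ n → StronglyMeasurable[ℱ n] (V n))
    (hVint : ∀ n, 1 ≤ n → Integrable (V n) μ)
    (hVnonneg : ∀ n, 1 ≤ n → ∀ ω, 0 ≤ V n ω)
    (hWmeas : ∀ n, 1 ≤ n → StronglyMeasurable[ℱ n] (W n))
    (hWint : ∀ n, 1 ≤ n → Integrable (W n) μ)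
    (hWnonneg : ∀ n, 1 ≤ n → ∀ ω, 0 ≤ W n ω)
    (hameas : ∀ n, 1 ≤ n → StronglyMeasurable[ℱ n] (a n))
    (haint : ∀ n, 1 ≤ n → Integrable (a n) μ)
    (hanonneg : ∀ n, 1 ≤ n → ∀ ω, 0 ≤ a n ω)
    (hbmeas : ∀ n, 1 ≤ n → StronglyMeasurable[ℱ n] (b n))
    (hbint : ∀ n, 1 ≤ n → Integrable (b n) μ)
    (hbnonneg : ∀ n, 1 ≤ n → ∀ ω, 0 ≤ b n ω)
    (hrec : ∀ n, 2 ≤ n → ∀ᵐ ω ∂μ,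
      (μ[V n | ℱ (n - 1)]) ω ≤
        V (n - 1) ω * (1 + a (n - 1) ω) + b (n - 1) ω - W (n - 1) ω) :
    ∀ᵐ ω ∂μ,
      ((Summable fun n => a n ω) ∧ (Summable fun n => b n ω)) →
        ((∃ c : ℝ, Tendsto (fun n => V n ω) atTop (nhds c)) ∧
          Summable fun n => W n ω) := by
  classical
  -- shifted filtration
  set G : Filtration ℕ m0 :=
    ⟨fun n => ℱ (n + 1), fun i j hij => ℱ.mono (by omega), fun n => ℱ.le (n + 1)⟩ with hG
  have hGeq : ∀ n, (G n : MeasurableSpace Ω) = ℱ (n + 1) := fun n => rfl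
  -- basic facts about A
  have hA1 : ∀ n ω, 1 ≤ RS.A a n ω := by
    intro n ω
    induction n with
    | zero => simp [RS.A]
    | succ n ih =>
      have h := hanonneg (n + 1) (by omega) ω
      rw [RS.A, Finset.prod_range_succ, ← RS.A]
      nlinarith
  have hApos : ∀ n ω, 0 < RS.A a n ω := fun n ω => lt_of_lt_of_le one_pos (hA1 n ω)
  have hAsucc : ∀ n ω, RS.A a (n + 1) ω = RS.A a n ω * (1 + a (n + 1) ω) :=
    fun n ω => Finset.prod_range_succ _ _
  have hAmeas : ∀ n m, n ≤ m + 1 → StronglyMeasurable[ℱ (m + 1)] (RS.A a n) := by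
    intro n m hnm
    apply Finset.stronglyMeasurable_fun_prod
    intro k hk
    rw [Finset.mem_range] at hk
    exact stronglyMeasurable_const.add
      ((hameas (k + 1) (by omega)).mono (ℱ.mono (by omega)))
  have hBmeas : ∀ n m, n ≤ m + 1 → StronglyMeasurable[ℱ (m + 1)] (RS.B b n) := by
    intro n m hnm
    apply Finset.stronglyMeasurable_fun_sum
    intro k hk
    rw [Finset.mem_range] at hk
    exact (hbmeas (k + 1) (by omega)).mono (ℱ.mono (by omega))
  -- measurability of U
  have hUmeas : ∀ n, StronglyMeasurable[ℱ (n + 1)] (RS.U V W a b n) := by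
    intro n
    apply StronglyMeasurable.add
    · exact ((hVmeas (n + 1) (by omega)).measurable.div
        (hAmeas n n (by omega)).measurable).stronglyMeasurable
    · apply Finset.stronglyMeasurable_fun_sum
      intro k hk
      rw [Finset.mem_range] at hk
      exact ((((hWmeas (k + 1) (by omega)).mono (ℱ.mono (by omega))).sub
        ((hbmeas (k + 1) (by omega)).mono (ℱ.mono (by omega)))).measurable.div
        (hAmeas (k + 1) n (by omega)).measurable).stronglyMeasurable
  -- integrability of U
  have hUint : ∀ n, Integrable (RS.U V W a b n) μ := by
    intro n
    apply Integrable.add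
    · refine Integrable.mono' (hVint (n + 1) (by omega)) ?_ ?_
      · exact ((((hVmeas (n + 1) (by omega)).measurable.div
          (hAmeas n n (by omega)).measurable).stronglyMeasurable).mono
          (ℱ.le _)).aestronglyMeasurable
      · refine Filter.Eventually.of_forall fun ω => ?_
        have h1 := hVnonneg (n + 1) (by omega) ω
        have h2 := hA1 n ω
        rw [Real.norm_eq_abs, abs_div, abs_of_nonneg h1,
          abs_of_pos (hApos n ω)]
        exact div_le_self h1 h2
    · apply integrable_finset_sum
      intro k hk
      rw [Finset.mem_range] at hk
      refine Integrable.mono'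
        (((hWint (k + 1) (by omega)).sub (hbint (k + 1) (by omega))).abs) ?_ ?_
      · exact (((((hWmeas (k + 1) (by omega)).mono (ℱ.mono (by omega))).sub
          ((hbmeas (k + 1) (by omega)).mono (ℱ.mono (by omega)))).measurable.div
          (hAmeas (k + 1) n (by omega)).measurable).stronglyMeasurable).mono
          (ℱ.le _) |>.aestronglyMeasurable
      · refine Filter.Eventually.of_forall fun ω => ?_
        rw [Real.norm_eq_abs, abs_div, abs_of_pos (hApos (k + 1) ω)]
        have := div_le_self (abs_nonneg (W (k + 1) ω - b (k + 1) ω)) (hA1 (k + 1) ω)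
        simpa using this
  -- the key supermartingale inequality for U
  have hUcond : ∀ n, (μ[RS.U V W a b (n + 1) | ℱ (n + 1)]) ≤ᵐ[μ] RS.U V W a b n := by
    intro n
    set i : Ω → ℝ := fun ω => (RS.A a (n + 1) ω)⁻¹ with hi
    have himeas : StronglyMeasurable[ℱ (n + 1)] i :=
      ((hAmeas (n + 1) n le_rfl).measurable.inv).stronglyMeasurable
    set Sf : Ω → ℝ := fun ω =>
      ∑ k ∈ Finset.range (n + 1), (W (k + 1) ω - b (k + 1) ω) / RS.A a (k + 1) ω with hSf
    have hSfmeas : StronglyMeasurable[ℱ (n + 1)] Sf := by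
      apply Finset.stronglyMeasurable_fun_sum
      intro k hk
      rw [Finset.mem_range] at hk
      exact ((((hWmeas (k + 1) (by omega)).mono (ℱ.mono (by omega))).sub
        ((hbmeas (k + 1) (by omega)).mono (ℱ.mono (by omega)))).measurable.div
        (hAmeas (k + 1) n (by omega)).measurable).stronglyMeasurable
    have hQint : Integrable (i * V (n + 2)) μ := by
      refine Integrable.mono' (hVint (n + 2) (by omega)) ?_ ?_
      · exact ((himeas.mono (ℱ.le _)).mul
          ((hVmeas (n + 2) (by omega)).mono (ℱ.le _))).aestronglyMeasurable
      · refine Filter.Eventually.of_forall fun ω => ?_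
        have h1 := hVnonneg (n + 2) (by omega) ω
        have h2 := hA1 (n + 1) ω
        have h3 := hApos (n + 1) ω
        rw [Pi.mul_apply, Real.norm_eq_abs, abs_mul, abs_of_pos (by positivity : (0:ℝ) < i ω),
          abs_of_nonneg h1, hi]
        calc (RS.A a (n + 1) ω)⁻¹ * V (n + 2) ω ≤ 1 * V (n + 2) ω := by
              apply mul_le_mul_of_nonneg_right _ h1
              rw [inv_le_one_iff₀]; right; exact h2
          _ = V (n + 2) ω := one_mul _
    have hSfint : Integrable Sf μ := by
      apply integrable_finset_sum
      intro k hk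
      rw [Finset.mem_range] at hk
      refine Integrable.mono'
        (((hWint (k + 1) (by omega)).sub (hbint (k + 1) (by omega))).abs) ?_ ?_
      · exact (((((hWmeas (k + 1) (by omega)).mono (ℱ.mono (by omega))).sub
          ((hbmeas (k + 1) (by omega)).mono (ℱ.mono (by omega)))).measurable.div
          (hAmeas (k + 1) n (by omega)).measurable).stronglyMeasurable).mono
          (ℱ.le _) |>.aestronglyMeasurable
      · refine Filter.Eventually.of_forall fun ω => ?_
        rw [Real.norm_eq_abs, abs_div, abs_of_pos (hApos (k + 1) ω)]
        have := div_le_self (abs_nonneg (W (k + 1) ω - b (k + 1) ω)) (hA1 (k + 1) ω)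
        simpa using this
    have hUeq : RS.U V W a b (n + 1) = i * V (n + 2) + Sf := by
      funext ω
      simp only [RS.U, Pi.add_apply, Pi.mul_apply, hi, hSf]
      rw [div_eq_inv_mul]
    have h1 : μ[RS.U V W a b (n + 1) | ℱ (n + 1)]
        =ᵐ[μ] μ[i * V (n + 2) | ℱ (n + 1)] + μ[Sf | ℱ (n + 1)] := by
      rw [hUeq]; exact condExp_add hQint hSfint _
    have h2 : μ[Sf | ℱ (n + 1)] = Sf :=
      condExp_of_stronglyMeasurable (ℱ.le _) hSfmeas hSfint
    have h3 : μ[i * V (n + 2) | ℱ (n + 1)] =ᵐ[μ] i * μ[V (n + 2) | ℱ (n + 1)] :=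
      condExp_mul_of_stronglyMeasurable_left himeas hQint (hVint (n + 2) (by omega))
    have h4 : ∀ᵐ ω ∂μ, (μ[V (n + 2) | ℱ (n + 1)]) ω ≤
        V (n + 1) ω * (1 + a (n + 1) ω) + b (n + 1) ω - W (n + 1) ω :=
      hrec (n + 2) (by omega)
    filter_upwards [h1, h3, h4] with ω hω1 hω3 hω4
    rw [hω1, Pi.add_apply, h2, hω3, Pi.mul_apply]
    have hipos : 0 < i ω := show 0 < (RS.A a (n + 1) ω)⁻¹ from inv_pos.mpr (hApos _ ω)
    have hle : i ω * (μ[V (n + 2) | ℱ (n + 1)]) ω ≤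
        i ω * (V (n + 1) ω * (1 + a (n + 1) ω) + b (n + 1) ω - W (n + 1) ω) :=
      mul_le_mul_of_nonneg_left hω4 hipos.le
    refine le_trans (add_le_add hle le_rfl) (le_of_eq ?_)
    -- algebra
    have h5 : (0:ℝ) < RS.A a n ω := hApos n ω
    have h6 : (0:ℝ) < 1 + a (n + 1) ω := by have := hanonneg (n + 1) (by omega) ω; linarith
    have hSfeq : Sf ω = (∑ k ∈ Finset.range n, (W (k + 1) ω - b (k + 1) ω) / RS.A a (k + 1) ω)
        + (W (n + 1) ω - b (n + 1) ω) / (RS.A a n ω * (1 + a (n + 1) ω)) := by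
      show (∑ k ∈ Finset.range (n + 1), (W (k + 1) ω - b (k + 1) ω) / RS.A a (k + 1) ω) = _
      rw [Finset.sum_range_succ, hAsucc n ω]
    have hieq : i ω = (RS.A a n ω * (1 + a (n + 1) ω))⁻¹ := by
      show (RS.A a (n + 1) ω)⁻¹ = _
      rw [hAsucc n ω]
    rw [RS.U, hSfeq, hieq]
    field_simp
    ring
  -- facts about X
  set c' : ℕ → ℝ := fun c => (c : ℝ) with hc'
  have hXmeas : ∀ (c : ℝ) n, StronglyMeasurable[ℱ (n + 1)] (RS.X V W a b c n) := by
    intro c n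
    induction n with
    | zero => exact hUmeas 0
    | succ n ih =>
      show StronglyMeasurable[ℱ (n + 2)] (fun ω => RS.X V W a b c n ω +
        ({ω' | RS.B b (n + 1) ω' ≤ c}).indicator (fun _ => (1 : ℝ)) ω *
          (RS.U V W a b (n + 1) ω - RS.U V W a b n ω))
      have hset : MeasurableSet[ℱ (n + 2)] {ω' | RS.B b (n + 1) ω' ≤ c} :=
        ((hBmeas (n + 1) (n + 1) (by omega)).measurable measurableSet_Iic)
      refine (ih.mono (ℱ.mono (by omega))).add ?_
      exact ((stronglyMeasurable_const.indicator hset)).mul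
        ((hUmeas (n + 1)).sub ((hUmeas n).mono (ℱ.mono (by omega))))
  have hXint : ∀ (c : ℝ) n, Integrable (RS.X V W a b c n) μ := by
    intro c n
    induction n with
    | zero => exact hUint 0
    | succ n ih =>
      refine ih.add ?_
      refine Integrable.bdd_mul (c := 1) ((hUint (n + 1)).sub (hUint n)) ?_
        (Filter.Eventually.of_forall fun ω => ?_)
      · exact (stronglyMeasurable_const.indicator
          ((ℱ.le _) _ ((hBmeas (n + 1) (n + 1) (by omega)).measurable measurableSet_Iic))
            : StronglyMeasurable (({ω' | RS.B b (n + 1) ω' ≤ c}).indicator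
                (fun _ => (1:ℝ)))).aestronglyMeasurable
      · rw [Real.norm_eq_abs]
        by_cases h : ω ∈ {ω' | RS.B b (n + 1) ω' ≤ c}
        · rw [Set.indicator_of_mem h]; norm_num
        · rw [Set.indicator_of_notMem h]; norm_num
  -- X is a supermartingale
  have hXsuper : ∀ (c : ℝ), Supermartingale (RS.X V W a b c) G μ := by
    intro c
    refine supermartingale_nat (fun n => hXmeas c n) (hXint c) fun n => ?_
    show μ[RS.X V W a b c (n + 1) | ℱ (n + 1)] ≤ᵐ[μ] RS.X V W a b c n
    set I : Ω → ℝ := ({ω' | RS.B b (n + 1) ω' ≤ c}).indicator (fun _ => (1 : ℝ)) with hI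
    have hImeas : StronglyMeasurable[ℱ (n + 1)] I :=
      stronglyMeasurable_const.indicator
        ((hBmeas (n + 1) n (by omega)).measurable measurableSet_Iic)
    have hIbd : ∀ ω, 0 ≤ I ω ∧ I ω ≤ 1 := by
      intro ω
      by_cases h : ω ∈ {ω' | RS.B b (n + 1) ω' ≤ c}
      · rw [hI, Set.indicator_of_mem h]; norm_num
      · rw [hI, Set.indicator_of_notMem h]; norm_num
    set D : Ω → ℝ := fun ω => RS.U V W a b (n + 1) ω - RS.U V W a b n ω with hD
    have hDint : Integrable D μ := (hUint (n + 1)).sub (hUint n)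
    have hIDint : Integrable (I * D) μ := by
      refine Integrable.bdd_mul hDint ((hImeas.mono (ℱ.le _)).aestronglyMeasurable)
        (c := 1) (Filter.Eventually.of_forall fun ω => ?_)
      rw [Real.norm_eq_abs, abs_of_nonneg (hIbd ω).1]; exact (hIbd ω).2
    have hXeq : RS.X V W a b c (n + 1) = RS.X V W a b c n + I * D := by
      funext ω; rfl
    have h1 : μ[RS.X V W a b c (n + 1) | ℱ (n + 1)]
        =ᵐ[μ] μ[RS.X V W a b c n | ℱ (n + 1)] + μ[I * D | ℱ (n + 1)] := by
      rw [hXeq]; exact condExp_add (hXint c n) hIDint _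
    have h2 : μ[RS.X V W a b c n | ℱ (n + 1)] = RS.X V W a b c n :=
      condExp_of_stronglyMeasurable (ℱ.le _) (hXmeas c n) (hXint c n)
    have h3 : μ[I * D | ℱ (n + 1)] =ᵐ[μ] I * μ[D | ℱ (n + 1)] :=
      condExp_mul_of_stronglyMeasurable_left hImeas hIDint hDint
    have h4 : μ[D | ℱ (n + 1)]
        =ᵐ[μ] μ[RS.U V W a b (n + 1) | ℱ (n + 1)] - μ[RS.U V W a b n | ℱ (n + 1)] := by
      rw [hD]; exact condExp_sub (hUint (n + 1)) (hUint n) _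
    have h5 : μ[RS.U V W a b n | ℱ (n + 1)] = RS.U V W a b n :=
      condExp_of_stronglyMeasurable (ℱ.le _) (hUmeas n) (hUint n)
    filter_upwards [h1, h3, h4, hUcond n] with ω hω1 hω3 hω4 hω5
    rw [hω1, Pi.add_apply, h2, hω3, Pi.mul_apply]
    have : (μ[D | ℱ (n + 1)]) ω ≤ 0 := by
      rw [hω4, Pi.sub_apply, h5]; linarith
    nlinarith [(hIbd ω).1]
  -- lower bound for U
  have hUlb : ∀ n ω, -RS.B b n ω ≤ RS.U V W a b n ω := by
    intro n ω
    have hQ : 0 ≤ V (n + 1) ω / RS.A a n ω :=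
      div_nonneg (hVnonneg (n + 1) (by omega) ω) (hApos n ω).le
    have hS : -RS.B b n ω ≤
        ∑ k ∈ Finset.range n, (W (k + 1) ω - b (k + 1) ω) / RS.A a (k + 1) ω := by
      rw [RS.B, ← Finset.sum_neg_distrib]
      apply Finset.sum_le_sum
      intro k hk
      rw [Finset.mem_range] at hk
      have hb := hbnonneg (k + 1) (by omega) ω
      have hw := hWnonneg (k + 1) (by omega) ω
      have hA := hA1 (k + 1) ω
      have h1 : -(b (k + 1) ω) ≤ -(b (k + 1) ω) / RS.A a (k + 1) ω := by
        rw [neg_div]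
        apply neg_le_neg
        exact div_le_self hb hA
      refine le_trans h1 ?_
      apply div_le_div_of_nonneg_right (by linarith) (hApos (k + 1) ω).le
    rw [RS.U]; linarith
  have hBmono : ∀ ω, Monotone fun n => RS.B b n ω := by
    intro ω
    apply monotone_nat_of_le_succ
    intro n
    rw [RS.B, RS.B, Finset.sum_range_succ]
    have := hbnonneg (n + 1) (by omega) ω
    linarith
  -- invariant for X
  have hXinv : ∀ (c : ℝ), 0 ≤ c → ∀ ω n,
      (-c ≤ RS.X V W a b c n ω) ∧
      (RS.B b (n + 1) ω ≤ c → RS.X V W a b c n ω = RS.U V W a b n ω) := by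
    intro c hc ω n
    induction n with
    | zero =>
      constructor
      · have h0 : RS.B b 0 ω = 0 := by simp [RS.B]
        have := hUlb 0 ω
        rw [h0] at this
        show -c ≤ RS.U V W a b 0 ω
        linarith
      · intro _; rfl
    | succ n ih =>
      have hstep : RS.X V W a b c (n + 1) ω = RS.X V W a b c n ω +
          ({ω' | RS.B b (n + 1) ω' ≤ c}).indicator (fun _ => (1 : ℝ)) ω *
            (RS.U V W a b (n + 1) ω - RS.U V W a b n ω) := rfl
      by_cases h : RS.B b (n + 1) ω ≤ c
      · have hXn : RS.X V W a b c n ω = RS.U V W a b n ω := ih.2 h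
        have hXeq : RS.X V W a b c (n + 1) ω = RS.U V W a b (n + 1) ω := by
          have hIv : ({ω' | RS.B b (n + 1) ω' ≤ c}).indicator (fun _ => (1:ℝ)) ω = 1 :=
            Set.indicator_of_mem (show ω ∈ {ω' | RS.B b (n + 1) ω' ≤ c} from h) _
          rw [hstep, hIv, hXn]; ring
        constructor
        · rw [hXeq]
          have := hUlb (n + 1) ω
          linarith
        · intro _; exact hXeq
      · have hXeq : RS.X V W a b c (n + 1) ω = RS.X V W a b c n ω := by
          have hIv : ({ω' | RS.B b (n + 1) ω' ≤ c}).indicator (fun _ => (1:ℝ)) ω = 0 :=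
            Set.indicator_of_notMem (show ω ∉ {ω' | RS.B b (n + 1) ω' ≤ c} from h) _
          rw [hstep, hIv]; ring
        constructor
        · rw [hXeq]; exact ih.1
        · intro h2
          exact absurd (le_trans (hBmono ω (by omega : n + 1 ≤ n + 2)) h2) h
  -- L¹ boundedness and convergence of X
  have hXconv : ∀ (c : ℕ), ∀ᵐ ω ∂μ,
      ∃ l : ℝ, Tendsto (fun n => RS.X V W a b (c : ℝ) n ω) atTop (nhds l) := by
    intro c
    set K : ℝ := ∫ ω, RS.X V W a b (c : ℝ) 0 ω ∂μ + 2 * c with hK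
    have hint0 : ∀ n, ∫ ω, RS.X V W a b (c : ℝ) n ω ∂μ ≤
        ∫ ω, RS.X V W a b (c : ℝ) 0 ω ∂μ := by
      intro n
      have h := (hXsuper (c : ℝ)).2.1 0 n (Nat.zero_le n)
      calc ∫ ω, RS.X V W a b (c : ℝ) n ω ∂μ
          = ∫ ω, (μ[RS.X V W a b (c : ℝ) n | G 0]) ω ∂μ :=
            (integral_condExp (G.le 0)).symm
        _ ≤ ∫ ω, RS.X V W a b (c : ℝ) 0 ω ∂μ :=
            integral_mono_ae integrable_condExp (hXint _ 0) h
    have habs : ∀ n, ∫ ω, |RS.X V W a b (c : ℝ) n ω| ∂μ ≤ K := by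
      intro n
      have hptw : ∀ ω, |RS.X V W a b (c : ℝ) n ω| ≤ RS.X V W a b (c : ℝ) n ω + 2 * c := by
        intro ω
        have hlb := (hXinv (c : ℝ) (by positivity) ω n).1
        rw [abs_le]; constructor <;> [linarith; linarith]
      calc ∫ ω, |RS.X V W a b (c : ℝ) n ω| ∂μ
          ≤ ∫ ω, (RS.X V W a b (c : ℝ) n ω + 2 * c) ∂μ :=
            integral_mono (hXint _ n).abs ((hXint _ n).add (integrable_const _))
              hptw
        _ = ∫ ω, RS.X V W a b (c : ℝ) n ω ∂μ + 2 * c := by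
            rw [integral_add (hXint _ n) (integrable_const _)]
            simp [measure_univ]
        _ ≤ K := by rw [hK]; linarith [hint0 n]
    have hbdd : ∀ n, eLpNorm (RS.X V W a b (c : ℝ) n) 1 μ ≤ ENNReal.ofReal K := by
      intro n
      rw [eLpNorm_one_eq_lintegral_enorm,
        ← ofReal_integral_norm_eq_lintegral_enorm (hXint _ n)]
      apply ENNReal.ofReal_le_ofReal
      simpa [Real.norm_eq_abs] using habs n
    have hsub : Submartingale (-(RS.X V W a b (c : ℝ))) G μ := (hXsuper _).neg
    have hbdd' : ∀ n, eLpNorm ((-(RS.X V W a b (c : ℝ))) n) 1 μ ≤ (K.toNNReal : ℝ≥0∞) := by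
      intro n
      simpa [eLpNorm_neg, ENNReal.ofReal] using hbdd n
    have := hsub.ae_tendsto_limitProcess hbdd'
    filter_upwards [this] with ω hω
    exact ⟨-(G.limitProcess (-(RS.X V W a b (c : ℝ))) μ ω), by
      have := hω.neg
      simpa using this⟩
  have hae : ∀ᵐ ω ∂μ, ∀ (c : ℕ),
      ∃ l : ℝ, Tendsto (fun n => RS.X V W a b (c : ℝ) n ω) atTop (nhds l) :=
    ae_all_iff.mpr hXconv
  -- pointwise conclusion
  filter_upwards [hae] with ω hω hsum
  obtain ⟨hsa, hsb⟩ := hsum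
  have hsa' : Summable fun n => a (n + 1) ω := (summable_nat_add_iff 1).mpr hsa
  have hsb' : Summable fun n => b (n + 1) ω := (summable_nat_add_iff 1).mpr hsb
  set c : ℕ := ⌈∑' n, b (n + 1) ω⌉₊ with hc
  have hBle : ∀ n, RS.B b n ω ≤ (c : ℝ) := by
    intro n
    calc RS.B b n ω ≤ ∑' k, b (k + 1) ω :=
          Summable.sum_le_tsum _ (fun k _ => hbnonneg (k + 1) (by omega) ω) hsb'
      _ ≤ (c : ℝ) := Nat.le_ceil _
  have hXU : ∀ n, RS.X V W a b (c : ℝ) n ω = RS.U V W a b n ω :=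
    fun n => (hXinv (c : ℝ) (by positivity) ω n).2 (hBle (n + 1))
  obtain ⟨L, hL⟩ := hω c
  have hUL : Tendsto (fun n => RS.U V W a b n ω) atTop (nhds L) := by
    simpa only [hXU] using hL
  -- convergence of A
  have hAmono : Monotone fun n => RS.A a n ω := by
    apply monotone_nat_of_le_succ
    intro n
    rw [hAsucc n ω]
    have h1 := hanonneg (n + 1) (by omega) ω
    have h2 := hApos n ω
    nlinarith
  have hAub : ∀ n, RS.A a n ω ≤ Real.exp (∑' k, a (k + 1) ω) := by
    intro n
    calc RS.A a n ω ≤ ∏ k ∈ Finset.range n, Real.exp (a (k + 1) ω) := by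
          apply Finset.prod_le_prod
          · intro k _; have := hanonneg (k + 1) (by omega) ω; linarith
          · intro k _
            have := Real.add_one_le_exp (a (k + 1) ω)
            linarith
      _ = Real.exp (∑ k ∈ Finset.range n, a (k + 1) ω) := (Real.exp_sum _ _).symm
      _ ≤ Real.exp (∑' k, a (k + 1) ω) := by
          apply Real.exp_le_exp.mpr
          exact Summable.sum_le_tsum _ (fun k _ => hanonneg (k + 1) (by omega) ω) hsa'
  have hAconv : Tendsto (fun n => RS.A a n ω) atTop (nhds (⨆ n, RS.A a n ω)) :=
    tendsto_atTop_ciSup hAmono ⟨Real.exp (∑' k, a (k + 1) ω), by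
      rintro x ⟨n, rfl⟩; exact hAub n⟩
  -- summability of b/A and W/A
  have hsbA : Summable fun k => b (k + 1) ω / RS.A a (k + 1) ω := by
    refine Summable.of_nonneg_of_le (fun k => ?_) (fun k => ?_) hsb'
    · exact div_nonneg (hbnonneg (k + 1) (by omega) ω) (hApos (k + 1) ω).le
    · exact div_le_self (hbnonneg (k + 1) (by omega) ω) (hA1 (k + 1) ω)
  have hUdecomp : ∀ n, RS.U V W a b n ω = V (n + 1) ω / RS.A a n ω
      + ∑ k ∈ Finset.range n, W (k + 1) ω / RS.A a (k + 1) ω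
      - ∑ k ∈ Finset.range n, b (k + 1) ω / RS.A a (k + 1) ω := by
    intro n
    have hsum : ∑ k ∈ Finset.range n, (W (k + 1) ω - b (k + 1) ω) / RS.A a (k + 1) ω
        = ∑ k ∈ Finset.range n, W (k + 1) ω / RS.A a (k + 1) ω
          - ∑ k ∈ Finset.range n, b (k + 1) ω / RS.A a (k + 1) ω := by
      rw [← Finset.sum_sub_distrib]
      exact Finset.sum_congr rfl fun k _ => sub_div _ _ _
    rw [RS.U, hsum]
    ring
  have hUbdd : BddAbove (Set.range fun n => RS.U V W a b n ω) := hUL.bddAbove_range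
  obtain ⟨MU, hMU⟩ := hUbdd
  have hswA : Summable fun k => W (k + 1) ω / RS.A a (k + 1) ω := by
    refine summable_of_sum_range_le (fun k => ?_) (c := MU + ∑' k, b (k + 1) ω / RS.A a (k + 1) ω)
      (fun n => ?_)
    · exact div_nonneg (hWnonneg (k + 1) (by omega) ω) (hApos (k + 1) ω).le
    · have h1 : ∑ k ∈ Finset.range n, W (k + 1) ω / RS.A a (k + 1) ω =
          RS.U V W a b n ω - V (n + 1) ω / RS.A a n ω
            + ∑ k ∈ Finset.range n, b (k + 1) ω / RS.A a (k + 1) ω := by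
        rw [hUdecomp n]; ring
      rw [h1]
      have h2 : RS.U V W a b n ω ≤ MU := hMU ⟨n, rfl⟩
      have h3 : 0 ≤ V (n + 1) ω / RS.A a n ω :=
        div_nonneg (hVnonneg (n + 1) (by omega) ω) (hApos n ω).le
      have h4 : ∑ k ∈ Finset.range n, b (k + 1) ω / RS.A a (k + 1) ω ≤
          ∑' k, b (k + 1) ω / RS.A a (k + 1) ω :=
        Summable.sum_le_tsum _ (fun k _ => div_nonneg (hbnonneg (k + 1) (by omega) ω)
          (hApos (k + 1) ω).le) hsbA
      linarith
  -- summability of W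
  have hsW' : Summable fun k => W (k + 1) ω := by
    refine Summable.of_nonneg_of_le (fun k => hWnonneg (k + 1) (by omega) ω) (fun k => ?_)
      (hswA.mul_left (Real.exp (∑' k, a (k + 1) ω)))
    have hq : 0 ≤ W (k + 1) ω / RS.A a (k + 1) ω :=
      div_nonneg (hWnonneg (k + 1) (by omega) ω) (hApos (k + 1) ω).le
    calc W (k + 1) ω
        = W (k + 1) ω / RS.A a (k + 1) ω * RS.A a (k + 1) ω :=
          (div_mul_cancel₀ _ (hApos (k + 1) ω).ne').symm
      _ ≤ W (k + 1) ω / RS.A a (k + 1) ω * Real.exp (∑' k, a (k + 1) ω) :=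
          mul_le_mul_of_nonneg_left (hAub (k + 1)) hq
      _ = Real.exp (∑' k, a (k + 1) ω) * (W (k + 1) ω / RS.A a (k + 1) ω) := mul_comm _ _
  have hsW : Summable fun n => W n ω := (summable_nat_add_iff 1).mp hsW'
  refine ⟨?_, hsW⟩
  -- convergence of V
  have hSwconv : Tendsto (fun n => ∑ k ∈ Finset.range n, W (k + 1) ω / RS.A a (k + 1) ω)
      atTop (nhds (∑' k, W (k + 1) ω / RS.A a (k + 1) ω)) := hswA.hasSum.tendsto_sum_nat
  have hSbconv : Tendsto (fun n => ∑ k ∈ Finset.range n, b (k + 1) ω / RS.A a (k + 1) ω)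
      atTop (nhds (∑' k, b (k + 1) ω / RS.A a (k + 1) ω)) := hsbA.hasSum.tendsto_sum_nat
  have hQconv : Tendsto (fun n => V (n + 1) ω / RS.A a n ω) atTop
      (nhds (L - ∑' k, W (k + 1) ω / RS.A a (k + 1) ω
        + ∑' k, b (k + 1) ω / RS.A a (k + 1) ω)) := by
    have heq : (fun n => V (n + 1) ω / RS.A a n ω) = fun n =>
        RS.U V W a b n ω - ∑ k ∈ Finset.range n, W (k + 1) ω / RS.A a (k + 1) ω
          + ∑ k ∈ Finset.range n, b (k + 1) ω / RS.A a (k + 1) ω := by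
      funext n
      rw [hUdecomp n]; ring
    rw [heq]
    exact (hUL.sub hSwconv).add hSbconv
  have hVconv : Tendsto (fun n => V (n + 1) ω) atTop
      (nhds ((L - ∑' k, W (k + 1) ω / RS.A a (k + 1) ω
        + ∑' k, b (k + 1) ω / RS.A a (k + 1) ω) * (⨆ n, RS.A a n ω))) := by
    have heq : (fun n => V (n + 1) ω) =
        fun n => V (n + 1) ω / RS.A a n ω * RS.A a n ω := by
      funext n
      rw [div_mul_cancel₀ _ (hApos n ω).ne']
    rw [heq]
    exact hQconv.mul hAconv
  exact ⟨_, (tendsto_add_atTop_iff_nat 1).mp hVconv⟩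
end
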